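/- arXiv:1711.01612 — 10 statements merged into one kernel-verified Lean document; each statement's English description precedes it below -/
import Mathlib

section
/- Let T be a self-adjoint bounded operator on a complex Hilbert space H. Then T attains its minimum modulus (i.e., there exists a unit vector x₀ with ‖Tx₀‖ = inf{‖Tx‖ : ‖x‖=1}) if and only if either m(T) or -m(T) is an eigenvalue of T, where m(T) = inf{‖Tx‖ : ‖x‖=1}. -/
open ContinuousLinearMap Filter Topology

noncomputable def mmod {H1 H2 : Type*} [NormedAddCommGroup H1] [InnerProductSpace ℂ H1]
    [NormedAddCommGroup H2] [InnerProductSpace ℂ H2] (T : H1 →L[ℂ] H2) : ℝ :=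
  sInf ((fun x => ‖T x‖) '' {x : H1 | ‖x‖ = 1})

def MinAttains {H1 H2 : Type*} [NormedAddCommGroup H1] [InnerProductSpace ℂ H1]
    [NormedAddCommGroup H2] [InnerProductSpace ℂ H2] (T : H1 →L[ℂ] H2) : Prop :=
  ∃ x : H1, ‖x‖ = 1 ∧ ‖T x‖ = mmod T

noncomputable def mmodOn {H1 H2 : Type*} [NormedAddCommGroup H1] [InnerProductSpace ℂ H1]
    [NormedAddCommGroup H2] [InnerProductSpace ℂ H2] (T : H1 →L[ℂ] H2)
    (M : Submodule ℂ H1) : ℝ :=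
  sInf ((fun x => ‖T x‖) '' {x : H1 | x ∈ M ∧ ‖x‖ = 1})

def MinAttainsOn {H1 H2 : Type*} [NormedAddCommGroup H1] [InnerProductSpace ℂ H1]
    [NormedAddCommGroup H2] [InnerProductSpace ℂ H2] (T : H1 →L[ℂ] H2)
    (M : Submodule ℂ H1) : Prop :=
  ∃ x : H1, x ∈ M ∧ ‖x‖ = 1 ∧ ‖T x‖ = mmodOn T M

def AbsMinAttains {H1 H2 : Type*} [NormedAddCommGroup H1] [InnerProductSpace ℂ H1]
    [NormedAddCommGroup H2] [InnerProductSpace ℂ H2] (T : H1 →L[ℂ] H2) : Prop :=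
  ∀ M : Submodule ℂ H1, M ≠ ⊥ → IsClosed (M : Set H1) → MinAttainsOn T M

theorem stmt0 {H : Type*} [NormedAddCommGroup H] [InnerProductSpace ℂ H]
    [CompleteSpace H] (T : H →L[ℂ] H) (hT : IsSelfAdjoint T) :
    MinAttains T ↔
      (Module.End.HasEigenvalue (T : H →ₗ[ℂ] H) ((mmod T : ℂ)) ∨
       Module.End.HasEigenvalue (T : H →ₗ[ℂ] H) (-(mmod T : ℂ))) := by
  have hm0 : 0 ≤ mmod T := by
    apply Real.sInf_nonneg
    rintro r ⟨x, -, rfl⟩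
    exact norm_nonneg _
  constructor
  · rintro ⟨x₀, hx₀, hTx₀⟩
    set m : ℝ := mmod T with hm
    have hx₀ne : x₀ ≠ 0 := by
      intro h; rw [h] at hx₀; simp at hx₀
    -- for all unit vectors, m ≤ ‖T x‖
    have hle : ∀ x : H, ‖x‖ = 1 → m ≤ ‖T x‖ := by
      intro x hx
      refine csInf_le ⟨0, ?_⟩ ⟨x, hx, rfl⟩
      rintro r ⟨y, -, rfl⟩; exact norm_nonneg _
    -- consider S = T ∘ T, self-adjoint
    set S : H →L[ℂ] H := T ∘L T with hS
    have hSsa : IsSelfAdjoint S := by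
      have : S = T * T := rfl
      rw [this, IsSelfAdjoint, star_mul, hT.star_eq]
    have hre : ∀ x : H, S.reApplyInnerSelf x = ‖T x‖ ^ 2 := by
      intro x
      have hsym := (ContinuousLinearMap.isSelfAdjoint_iff_isSymmetric.mp hT)
      rw [ContinuousLinearMap.reApplyInnerSelf]
      have : (inner ℂ (S x) x : ℂ) = inner ℂ (T x) (T x) := by
        rw [hS]
        simpa using hsym (T x) x
      rw [this]
      exact inner_self_eq_norm_sq (𝕜 := ℂ) (T x)
    -- x₀ minimizes reApplyInnerSelf S on the unit sphere
    have hmin : IsMinOn S.reApplyInnerSelf (Metric.sphere (0 : H) ‖x₀‖) x₀ := by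
      intro x hx
      have hx1 : ‖x‖ = 1 := by
        simpa [hx₀] using (mem_sphere_zero_iff_norm.mp hx)
      have h1 : m ≤ ‖T x‖ := hle x hx1
      have h2 : S.reApplyInnerSelf x₀ = m ^ 2 := by rw [hre, hTx₀]
      rw [Set.mem_setOf_eq, h2, hre]
      exact pow_le_pow_left₀ hm0 h1 2
    have heig := hSsa.eq_smul_self_of_isLocalExtrOn (x₀ := x₀) (Or.inl hmin.localize)
    have hray : S.rayleighQuotient x₀ = m ^ 2 := by
      rw [ContinuousLinearMap.rayleighQuotient, hre, hTx₀, hx₀]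
      simp
    rw [hray] at heig
    -- heig : S x₀ = ((m^2 : ℝ) : ℂ) • x₀
    have hT2 : T (T x₀) = ((m : ℂ) ^ 2) • x₀ := by
      have : S x₀ = T (T x₀) := rfl
      rw [← this, heig]
      norm_num
    -- factor (T - m)(T + m) x₀ = 0
    by_cases hu : T x₀ + (m : ℂ) • x₀ = 0
    · right
      have hxeig : T x₀ = (-(m : ℂ)) • x₀ := by
        have := hu
        rw [add_eq_zero_iff_eq_neg] at this
        rw [this, neg_smul]
      exact Module.End.hasEigenvalue_of_hasEigenvector
        ⟨Module.End.mem_eigenspace_iff.mpr hxeig, hx₀ne⟩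
    · left
      set u : H := T x₀ + (m : ℂ) • x₀ with hudef
      have hueig : T u = (m : ℂ) • u := by
        rw [hudef]
        rw [map_add, map_smul, hT2, smul_add, smul_smul]
        rw [sq]
        abel
      exact Module.End.hasEigenvalue_of_hasEigenvector
        ⟨Module.End.mem_eigenspace_iff.mpr hueig, hu⟩
  · rintro (h | h)
    · obtain ⟨v, hv⟩ := h.exists_hasEigenvector
      have hv0 : v ≠ 0 := hv.2
      have hTv : T v = ((mmod T : ℂ)) • v := Module.End.mem_eigenspace_iff.mp hv.1
      refine ⟨(‖v‖⁻¹ : ℂ) • v, ?_, ?_⟩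
      · rw [norm_smul]
        simp [norm_ne_zero_iff.mpr hv0]
      · rw [map_smul, hTv, smul_smul, norm_smul, norm_mul]
        simp only [norm_inv, Complex.norm_real, Real.norm_eq_abs, abs_norm]
        rw [abs_of_nonneg hm0]
        field_simp [norm_ne_zero_iff.mpr hv0]
    · obtain ⟨v, hv⟩ := h.exists_hasEigenvector
      have hv0 : v ≠ 0 := hv.2
      have hTv : T v = (-(mmod T : ℂ)) • v := Module.End.mem_eigenspace_iff.mp hv.1
      refine ⟨(‖v‖⁻¹ : ℂ) • v, ?_, ?_⟩
      · rw [norm_smul]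
        simp [norm_ne_zero_iff.mpr hv0]
      · rw [map_smul, hTv, smul_smul, norm_smul, norm_mul]
        simp only [norm_inv, Complex.norm_real, Real.norm_eq_abs, abs_norm, norm_neg]
        rw [abs_of_nonneg hm0]
        field_simp [norm_ne_zero_iff.mpr hv0]
end

section
/- Let T be a positive bounded operator on a complex Hilbert space H. Then T attains its minimum modulus if and only if m(T) is an eigenvalue of T. -/
open ContinuousLinearMap Filter Topology

open RCLike
open scoped InnerProductSpace


lemma pos_apply_eq_zero {H : Type*} [NormedAddCommGroup H] [InnerProductSpace ℂ H]
    [CompleteSpace H]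
    {S : H →L[ℂ] H} (hS : S.IsPositive) {x : H} (hx : ⟪S x, x⟫_ℂ = 0) : S x = 0 := by
  set y := S x with hy
  set a : ℝ := ‖S x‖ ^ 2 with ha
  set b : ℝ := re ⟪S y, y⟫_ℂ with hb
  have hsym : (S : H →ₗ[ℂ] H).IsSymmetric := hS.1
  have hb0 : 0 ≤ b := (Complex.nonneg_iff.mp (hS.inner_nonneg_left y)).1
  have hSxy : ⟪S x, y⟫_ℂ = (a : ℂ) := by
    rw [hy, ha, inner_self_eq_norm_sq_to_K]; norm_num
  have hSyx : ⟪S y, x⟫_ℂ = (a : ℂ) := by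
    have h1 : ⟪S y, x⟫_ℂ = ⟪y, S x⟫_ℂ := hsym y x
    rw [h1, hy, ha, inner_self_eq_norm_sq_to_K]; norm_num
  have hSyy : ⟪S y, y⟫_ℂ = (b : ℂ) := by
    have h2 : (starRingEnd ℂ) ⟪S y, y⟫_ℂ = ⟪S y, y⟫_ℂ := by
      rw [inner_conj_symm]; exact (hsym y y).symm
    have h3 := Complex.conj_eq_iff_re.mp h2
    rw [← h3, hb]
    norm_num [RCLike.re_to_complex]
  have key : ∀ t : ℝ, 0 ≤ 2 * t * a + t ^ 2 * b := by
    intro t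
    have h0 := hS.inner_nonneg_left (x + (t : ℂ) • y)
    have hexp : ⟪S (x + (t : ℂ) • y), x + (t : ℂ) • y⟫_ℂ
        = ((2 * t * a + t ^ 2 * b : ℝ) : ℂ) := by
      rw [map_add, map_smul]
      simp only [inner_add_left, inner_add_right, inner_smul_left, inner_smul_right, show ⟪S x, x⟫_ℂ = 0 from hx,
        hSxy, hSyx, hSyy]
      push_cast
      simp [Complex.conj_ofReal]
      ring
    rw [hexp] at h0
    exact Complex.zero_le_real.mp h0
  have ha0 : 0 ≤ a := sq_nonneg _
  have hb1 : (0:ℝ) < b + 1 := by linarith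
  have hkey := mul_nonneg (key (-a / (b + 1))) (sq_nonneg (b + 1))
  have hne : (b + 1 : ℝ) ≠ 0 := hb1.ne'
  have h2 : (2 * (-a / (b + 1)) * a + (-a / (b + 1)) ^ 2 * b) * (b + 1) ^ 2
      = -a ^ 2 * (b + 2) := by field_simp; ring
  rw [h2] at hkey
  have : a = 0 := by nlinarith
  have := pow_eq_zero_iff (n := 2) (by norm_num) |>.mp (ha ▸ this)
  simpa [norm_eq_zero] using this

theorem stmt1 {H : Type*} [NormedAddCommGroup H] [InnerProductSpace ℂ H]
    [CompleteSpace H] (T : H →L[ℂ] H) (hT : T.IsPositive) :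
    MinAttains T ↔ Module.End.HasEigenvalue (T : H →ₗ[ℂ] H) ((mmod T : ℂ)) := by
  set m := mmod T with hm
  have hm0 : 0 ≤ m := Real.sInf_nonneg (by rintro r ⟨z, hz, rfl⟩; exact norm_nonneg _)
  have hsym : (T : H →ₗ[ℂ] H).IsSymmetric := hT.1
  constructor
  · rintro ⟨x₀, hx1, hx2⟩
    have hx0 : x₀ ≠ 0 := fun h => by simp [h] at hx1
    have hTx : T x₀ = (m : ℂ) • x₀ := by
      rcases eq_or_lt_of_le hm0 with hm0' | hmpos
      · have h0 : T x₀ = 0 := norm_eq_zero.mp (by rw [hx2, ← hm, ← hm0'])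
        rw [h0, ← hm0']; simp
      · -- lower bound
        have hlow : ∀ x : H, ‖x‖ = 1 → m ≤ ‖T x‖ := fun x hx =>
          csInf_le ⟨0, by rintro r ⟨z, hz, rfl⟩; exact norm_nonneg _⟩ ⟨x, hx, rfl⟩
        have hlow' : ∀ x : H, m * ‖x‖ ≤ ‖T x‖ := by
          intro x
          rcases eq_or_ne x 0 with rfl | hx
          · simp
          · have hn : ‖x‖ ≠ 0 := norm_ne_zero_iff.mpr hx
            have h1 : ‖((‖x‖⁻¹ : ℝ) : ℂ) • x‖ = 1 := by
              simp [norm_smul, inv_mul_cancel₀ hn]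
            have h2 := hlow _ h1
            rw [map_smul, norm_smul] at h2
            simp only [Complex.norm_real, norm_inv, Real.norm_eq_abs,
              abs_of_nonneg (norm_nonneg x)] at h2
            rw [mul_comm]
            calc ‖x‖ * m ≤ ‖x‖ * (‖x‖⁻¹ * ‖T x‖) := by
                  exact mul_le_mul_of_nonneg_left h2 (norm_nonneg x)
              _ = ‖T x‖ := by field_simp
        set S : H →L[ℂ] H := T.comp T - ((m : ℂ) ^ 2) • 1 with hSdef
        have hTT : ∀ z : H, ⟪T (T z), z⟫_ℂ = ((‖T z‖ ^ 2 : ℝ) : ℂ) := by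
          intro z
          have h1 : ⟪T (T z), z⟫_ℂ = ⟪T z, T z⟫_ℂ := hsym (T z) z
          rw [h1, inner_self_eq_norm_sq_to_K]; norm_num
        have hSapp : ∀ z : H, ⟪S z, z⟫_ℂ = ((‖T z‖ ^ 2 - m ^ 2 * ‖z‖ ^ 2 : ℝ) : ℂ) := by
          intro z
          rw [hSdef]
          simp only [sub_apply, smul_apply, one_apply, inner_sub_left, inner_smul_left, hTT,
            inner_self_eq_norm_sq_to_K, ContinuousLinearMap.comp_apply, map_pow,
            Complex.conj_ofReal]
          push_cast
          simp [inner_self_eq_norm_sq_to_K]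
        have hSpos : S.IsPositive := by
          constructor
          · have h1 : IsSelfAdjoint (T.comp T) := by
              rw [IsSelfAdjoint, ← ContinuousLinearMap.mul_def, star_mul, (isSelfAdjoint_iff_isSymmetric.mpr hT.1).star_eq,
                ContinuousLinearMap.mul_def]
            have h2 : IsSelfAdjoint (((m : ℂ) ^ 2) • (1 : H →L[ℂ] H)) := by
              rw [IsSelfAdjoint, star_smul, star_one, RCLike.star_def,
                ← Complex.ofReal_pow, Complex.conj_ofReal, Complex.ofReal_pow]
            exact isSelfAdjoint_iff_isSymmetric.mp (h1.sub h2)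
          · intro z
            rw [reApplyInnerSelf_apply, hSapp z,
              show re ((‖T z‖ ^ 2 - m ^ 2 * ‖z‖ ^ 2 : ℝ) : ℂ)
                = ‖T z‖ ^ 2 - m ^ 2 * ‖z‖ ^ 2 from rfl]
            nlinarith [hlow' z, norm_nonneg z, norm_nonneg (T z),
              mul_le_mul (hlow' z) (hlow' z) (mul_nonneg hm0 (norm_nonneg z))
                (norm_nonneg (T z))]
        have hzero : ⟪S x₀, x₀⟫_ℂ = 0 := by
          rw [hSapp x₀, hx1, hx2, ← hm]; norm_num
        have hS0 : S x₀ = 0 := pos_apply_eq_zero hSpos hzero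
        have hTTx : T (T x₀) = ((m : ℂ) ^ 2) • x₀ := by
          have := hS0
          rw [hSdef] at this
          simpa [sub_eq_zero] using this
        set y : H := T x₀ - (m : ℂ) • x₀ with hydef
        have hy0 : T y + (m : ℂ) • y = 0 := by
          rw [hydef, map_sub, map_smul, hTTx]
          module
        have hyz : y = 0 := by
          by_contra hy
          have h1 : re ⟪T y + (m : ℂ) • y, y⟫_ℂ = 0 := by rw [hy0]; simp
          have h2 : re ⟪T y, y⟫_ℂ ≥ 0 := (Complex.nonneg_iff.mp (hT.inner_nonneg_left y)).1
          have h3 : re ⟪(m : ℂ) • y, y⟫_ℂ = m * ‖y‖ ^ 2 := by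
            rw [inner_smul_left, Complex.conj_ofReal, inner_self_eq_norm_sq_to_K]
            norm_num [← Complex.ofReal_pow]
          rw [inner_add_left, map_add, h3] at h1
          have h4 : 0 < ‖y‖ ^ 2 := pow_pos (norm_pos_iff.mpr hy) 2
          nlinarith
        rw [sub_eq_zero] at hyz
        exact hyz
    exact Module.End.hasEigenvalue_of_hasEigenvector
      ⟨Module.End.mem_eigenspace_iff.mpr hTx, hx0⟩
  · intro h
    obtain ⟨x, hx⟩ := h.exists_hasEigenvector
    have hx0 : x ≠ 0 := hx.2
    have hn : ‖x‖ ≠ 0 := norm_ne_zero_iff.mpr hx0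
    refine ⟨((‖x‖⁻¹ : ℝ) : ℂ) • x, by simp [norm_smul, inv_mul_cancel₀ hn], ?_⟩
    have hTx : T x = (m : ℂ) • x := hx.apply_eq_smul
    rw [map_smul, hTx, smul_comm, norm_smul]
    simp [norm_smul, inv_mul_cancel₀ hn, abs_of_nonneg hm0]
    exact hm
end

section
/- The weighted shift T on ℓ² defined by Te₁ = 0 and Teₙ = (1/(n-1)) e_{n-1} for n ≥ 2 is minimum attaining, but its adjoint T* (which satisfies T*eₙ = (1/n) e_{n+1}) has m(T*) = 0 and is not minimum attaining. -/
open ContinuousLinearMap Filter Topology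

theorem stmt5
    (T : lp (fun _ : ℕ => ℂ) 2 →L[ℂ] lp (fun _ : ℕ => ℂ) 2)
    (e : ℕ → lp (fun _ : ℕ => ℂ) 2)
    (he : ∀ n, e n = lp.single 2 n (1 : ℂ))
    (hT0 : T (e 0) = 0)
    (hTn : ∀ n : ℕ, T (e (n + 1)) = ((n + 1 : ℂ))⁻¹ • e n) :
    MinAttains T ∧
      (∀ n : ℕ, ContinuousLinearMap.adjoint T (e n) = ((n + 1 : ℂ))⁻¹ • e (n + 1)) ∧
      mmod (ContinuousLinearMap.adjoint T) = 0 ∧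
      ¬ MinAttains (ContinuousLinearMap.adjoint T) := by
  have hnorm_e : ∀ n, ‖e n‖ = 1 := by
    intro n; rw [he n]
    have := lp.norm_single (p := 2) (E := fun _ : ℕ => ℂ) (by norm_num) n (1 : ℂ)
    simpa using this
  have coord : ∀ (v : lp (fun _ : ℕ => ℂ) 2) (n : ℕ),
      (inner (𝕜 := ℂ) (e n) v) = (v : ∀ _ : ℕ, ℂ) n := by
    intro v n; rw [he n, lp.inner_single_left]; simp [RCLike.inner_apply]
  have e_apply : ∀ n m : ℕ, ((e n : lp (fun _ : ℕ => ℂ) 2) : ∀ _ : ℕ, ℂ) m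
      = if m = n then 1 else 0 := by
    intro n m; rw [he n]
    rcases eq_or_ne m n with h | h
    · subst h; simp [lp.single_apply_self]
    · simp [lp.single_apply_ne _ _ _ h, h]
  have hbdd : ∀ (S : lp (fun _ : ℕ => ℂ) 2 →L[ℂ] lp (fun _ : ℕ => ℂ) 2),
      BddBelow ((fun x => ‖S x‖) '' {x | ‖x‖ = 1}) := by
    intro S; refine ⟨0, ?_⟩; rintro y ⟨x, hx, rfl⟩; exact norm_nonneg _
  have h0 : (0 : ℝ) ∈ (fun x => ‖T x‖) '' {x | ‖x‖ = 1} := ⟨e 0, hnorm_e 0, by simp [hT0]⟩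
  have hmT : mmod T = 0 := by
    apply le_antisymm
    · exact csInf_le (hbdd T) h0
    · apply le_csInf ⟨0, h0⟩
      rintro y ⟨x, hx, rfl⟩; exact norm_nonneg _
  have hadj : ∀ n : ℕ, ContinuousLinearMap.adjoint T (e n) = ((n + 1 : ℂ))⁻¹ • e (n + 1) := by
    intro n
    apply lp.ext
    funext m
    have h1 : ((ContinuousLinearMap.adjoint T (e n) : lp (fun _ : ℕ => ℂ) 2) : ∀ _ : ℕ, ℂ) m
        = inner (𝕜 := ℂ) (T (e m)) (e n) := by
      rw [← coord _ m, adjoint_inner_right]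
    have h2 : ((((n + 1 : ℂ))⁻¹ • e (n + 1) : lp (fun _ : ℕ => ℂ) 2) : ∀ _ : ℕ, ℂ) m
        = ((n + 1 : ℂ))⁻¹ * ((e (n + 1) : lp (fun _ : ℕ => ℂ) 2) : ∀ _ : ℕ, ℂ) m := by
      simp
    rw [h1, h2]
    cases m with
    | zero => rw [hT0]; simp [e_apply]
    | succ k =>
      rw [hTn k, inner_smul_left, coord, e_apply, e_apply]
      rcases eq_or_ne k n with h | h
      · subst h; simp [map_inv₀, map_add, Complex.conj_natCast]
      · have h' : k + 1 ≠ n + 1 := fun hh => h (Nat.succ_injective hh)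
        simp [h, h']
  have hmem : ∀ n : ℕ, ((n : ℝ) + 1)⁻¹
      ∈ (fun x => ‖ContinuousLinearMap.adjoint T x‖) '' {x | ‖x‖ = 1} := by
    intro n
    refine ⟨e n, hnorm_e n, ?_⟩
    show ‖ContinuousLinearMap.adjoint T (e n)‖ = _
    rw [hadj n, norm_smul, hnorm_e, mul_one, norm_inv]
    congr 1
    rw [show ((n : ℂ) + 1) = ((n + 1 : ℕ) : ℂ) by push_cast; ring, Complex.norm_natCast]
    push_cast; ring
  have hm2 : mmod (ContinuousLinearMap.adjoint T) = 0 := by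
    apply le_antisymm
    · apply le_of_forall_pos_le_add
      intro ε hε
      obtain ⟨n, hn⟩ := exists_nat_gt ε⁻¹
      have hna : (0 : ℝ) < (n : ℝ) + 1 := by positivity
      have hle : ((n : ℝ) + 1)⁻¹ ≤ ε := by
        have h1 : ((n : ℝ) + 1)⁻¹ * ((n : ℝ) + 1) = 1 := inv_mul_cancel₀ hna.ne'
        have h2 : ε * ε⁻¹ = 1 := mul_inv_cancel₀ hε.ne'
        nlinarith [inv_pos.mpr hna, inv_pos.mpr hε]
      calc mmod (ContinuousLinearMap.adjoint T) ≤ ((n : ℝ) + 1)⁻¹ :=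
            csInf_le (hbdd _) (hmem n)
        _ ≤ ε := hle
        _ = 0 + ε := by ring
    · apply le_csInf ⟨_, hmem 0⟩
      rintro y ⟨x, hx, rfl⟩; exact norm_nonneg _
  refine ⟨⟨e 0, hnorm_e 0, by rw [hmT, hT0, norm_zero]⟩, hadj, hm2, ?_⟩
  rintro ⟨x, hx1, hx2⟩
  rw [hm2] at hx2
  have hx0 : ContinuousLinearMap.adjoint T x = 0 := norm_eq_zero.mp hx2
  have hxk : ∀ k : ℕ, (x : ∀ _ : ℕ, ℂ) k = 0 := by
    intro k
    have h1 : inner (𝕜 := ℂ) (e (k + 1)) (ContinuousLinearMap.adjoint T x) = 0 := by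
      rw [hx0, inner_zero_right]
    rw [adjoint_inner_right, hTn k, inner_smul_left, coord] at h1
    have hne : (starRingEnd ℂ) ((k : ℂ) + 1)⁻¹ ≠ 0 := by
      apply star_ne_zero.mpr
      exact inv_ne_zero (Nat.cast_add_one_ne_zero k)
    exact (mul_eq_zero.mp h1).resolve_left hne
  have hx : x = 0 := by
    apply lp.ext; funext k; rw [lp.coeFn_zero, Pi.zero_apply]; exact hxk k
  rw [hx, norm_zero] at hx1
  exact one_ne_zero hx1.symm
end

section
/- Let T be a positive absolutely minimum attaining operator on H with orthonormal eigenbasis {u_λ : λ ∈ Λ}, Tu_λ = α_λ u_λ. Then for every nonempty subset Γ ⊆ Λ, the infimum inf{α_λ : λ ∈ Γ} is attained, i.e., equals min{α_λ : λ ∈ Γ}. -/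
open ContinuousLinearMap Filter Topology
open scoped ComplexInnerProductSpace

private lemma conj_mul_re' (z : ℂ) : ((starRingEnd ℂ) z * z).re = ‖z‖ ^ 2 := by
  rw [mul_comm, Complex.mul_conj]
  simp [Complex.normSq_eq_norm_sq]
  norm_cast

theorem stmt7 {H : Type*} [NormedAddCommGroup H] [InnerProductSpace ℂ H]
    [CompleteSpace H] (T : H →L[ℂ] H) (hT : T.IsPositive) (hAM : AbsMinAttains T)
    {Λ : Type*} (u : HilbertBasis Λ ℂ H) (α : Λ → ℝ) (hα : ∀ l, 0 ≤ α l)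
    (heig : ∀ l, T (u l) = (α l : ℂ) • u l) :
    ∀ Γ : Set Λ, Γ.Nonempty → ∃ l ∈ Γ, α l = sInf (α '' Γ) := by
  classical
  intro Γ hΓ
  by_contra hcon
  push_neg at hcon
  set c := sInf (α '' Γ) with hc
  have hbdd : BddBelow (α '' Γ) := ⟨0, by rintro _ ⟨l, _, rfl⟩; exact hα l⟩
  have hlt : ∀ l ∈ Γ, c < α l := fun l hl =>
    lt_of_le_of_ne (csInf_le hbdd ⟨l, hl, rfl⟩) (fun h => hcon l hl h.symm)
  have hc0 : 0 ≤ c := le_csInf (hΓ.image α) (by rintro _ ⟨l, _, rfl⟩; exact hα l)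
  set M := (Submodule.span ℂ (u '' Γ)).topologicalClosure with hM
  have hclosed : IsClosed (M : Set H) := Submodule.isClosed_topologicalClosure _
  obtain ⟨l₀, hl₀⟩ := hΓ
  have hulM : ∀ l ∈ Γ, u l ∈ M := fun l hl =>
    Submodule.le_topologicalClosure _ (Submodule.subset_span ⟨l, hl, rfl⟩)
  have hMne : M ≠ ⊥ := by
    intro h
    have hmem : u l₀ ∈ M := hulM l₀ hl₀
    rw [h, Submodule.mem_bot] at hmem
    have h1 := u.orthonormal.1 l₀
    rw [hmem] at h1; simp at h1
  obtain ⟨x, hxM, hx1, hxmin⟩ := hAM M hMne hclosed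
  have hcoef0 : ∀ l ∉ Γ, ⟪u l, x⟫ = 0 := by
    intro l hl
    have hker : M ≤ LinearMap.ker (innerSL ℂ (u l) : H →ₗ[ℂ] ℂ) := by
      apply Submodule.topologicalClosure_minimal
      · rw [Submodule.span_le]
        rintro _ ⟨l', hl', rfl⟩
        have hne : l ≠ l' := fun h => hl (h ▸ hl')
        simpa [LinearMap.mem_ker] using u.orthonormal.2 hne
      · exact ContinuousLinearMap.isClosed_ker (innerSL ℂ (u l))
    simpa using hker hxM
  have hTul : ∀ l, ⟪u l, T x⟫ = (α l : ℂ) * ⟪u l, x⟫ := by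
    intro l
    rw [← ContinuousLinearMap.adjoint_inner_left, hT.isSelfAdjoint.adjoint_eq, heig l,
      inner_smul_left]
    simp
  have hub : ‖T x‖ ≤ c := by
    rw [hxmin]
    apply le_csInf ((Set.nonempty_of_mem hl₀).image α)
    rintro _ ⟨l, hl, rfl⟩
    apply csInf_le ⟨0, by rintro _ ⟨y, _, rfl⟩; exact norm_nonneg _⟩
    refine ⟨u l, ⟨hulM l hl, u.orthonormal.1 l⟩, ?_⟩
    show ‖T (u l)‖ = α l
    rw [heig l, norm_smul]
    simp [u.orthonormal.1 l, abs_of_nonneg (hα l)]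
  have hxx : ⟪x, x⟫ = 1 := by
    rw [inner_self_eq_norm_sq_to_K (𝕜 := ℂ) x, hx1]
    norm_num
  have hfun1 : (fun l => (⟪x, u l⟫ * ⟪u l, x⟫).re) = fun l => ‖⟪u l, x⟫‖ ^ 2 :=
    funext fun l => by rw [← inner_conj_symm x (u l), conj_mul_re']
  have hsum1 : HasSum (fun l => ‖⟪u l, x⟫‖ ^ 2) 1 := by
    have h := (u.hasSum_inner_mul_inner x x).mapL Complex.reCLM
    simp only [Complex.reCLM_apply, hxx, Complex.one_re] at h
    rwa [hfun1] at h
  have hfun2 : (fun l => (⟪x, u l⟫ * ⟪u l, T x⟫).re)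
      = fun l => α l * ‖⟪u l, x⟫‖ ^ 2 := by
    funext l
    rw [hTul l, ← mul_assoc, mul_comm (⟪x, u l⟫) ((α l : ℂ)), mul_assoc,
      ← inner_conj_symm x (u l)]
    rw [Complex.re_ofReal_mul, conj_mul_re']
  have hsum2 : HasSum (fun l => α l * ‖⟪u l, x⟫‖ ^ 2) (⟪x, T x⟫).re := by
    have h := (u.hasSum_inner_mul_inner x (T x)).mapL Complex.reCLM
    simp only [Complex.reCLM_apply] at h
    rwa [hfun2] at h
  have hex : ∃ l, ⟪u l, x⟫ ≠ 0 := by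
    by_contra h
    push_neg at h
    have h0 : HasSum (fun l : Λ => ‖⟪u l, x⟫‖ ^ 2) 0 := by
      convert hasSum_zero with l
      simp [h l]
    exact one_ne_zero (hsum1.unique h0)
  obtain ⟨l₁, hl₁⟩ := hex
  have hl₁Γ : l₁ ∈ Γ := by
    by_contra hn
    exact hl₁ (hcoef0 l₁ hn)
  have hcsum : HasSum (fun l => c * ‖⟪u l, x⟫‖ ^ 2) c := by
    simpa using hsum1.mul_left c
  have hstrict : c < (⟪x, T x⟫).re := by
    refine hasSum_lt (i := l₁) ?_ ?_ hcsum hsum2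
    · intro l
      rcases eq_or_ne (⟪u l, x⟫) 0 with h | h
      · simp [h]
      · have hlΓ : l ∈ Γ := by
          by_contra hn
          exact h (hcoef0 l hn)
        exact mul_le_mul_of_nonneg_right (hlt l hlΓ).le (by positivity)
    · have hp : 0 < ‖⟪u l₁, x⟫‖ ^ 2 := pow_pos (norm_pos_iff.mpr hl₁) 2
      exact mul_lt_mul_of_pos_right (hlt l₁ hl₁Γ) hp
  have hre : (⟪x, T x⟫).re ≤ ‖T x‖ := by
    calc (⟪x, T x⟫).re ≤ ‖⟪x, T x⟫‖ := Complex.re_le_norm _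
    _ ≤ ‖x‖ * ‖T x‖ := norm_inner_le_norm x (T x)
    _ = ‖T x‖ := by rw [hx1, one_mul]
  linarith
end

section
/- Let T be a positive absolutely minimum attaining operator on H. If (aₙ) and (bₙ) are increasing sequences of eigenvalues of T with corresponding orthonormal sequences of eigenvectors (fₙ) and (gₙ), with aₙ → a and bₙ → b, then a = b. -/
open ContinuousLinearMap Filter Topology

local notation "⟪" x ", " y "⟫" => @inner ℂ _ _ x y

-- eigenvectors of symmetric operator for distinct real eigenvalues are orthogonal
lemma eig_orth {H : Type*} [NormedAddCommGroup H] [InnerProductSpace ℂ H]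
    (T : H →L[ℂ] H) (hsym : (T : H →ₗ[ℂ] H).IsSymmetric) {μ ν : ℝ} {u v : H}
    (hu : T u = (μ:ℂ) • u) (hv : T v = (ν:ℂ) • v) (hμν : μ ≠ ν) : ⟪u, v⟫ = 0 := by
  have h1 : ⟪T u, v⟫ = (μ:ℂ) * ⟪u, v⟫ := by
    rw [hu, inner_smul_left, Complex.conj_ofReal]
  have h2 : ⟪u, T v⟫ = (ν:ℂ) * ⟪u, v⟫ := by rw [hv, inner_smul_right]
  have h3 : ⟪T u, v⟫ = ⟪u, T v⟫ := hsym u v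
  rw [h1, h2] at h3
  have : ((μ:ℂ) - ν) * ⟪u, v⟫ = 0 := by rw [sub_mul, h3, sub_self]
  rcases mul_eq_zero.mp this with h | h
  · exact absurd (by exact_mod_cast sub_eq_zero.mp h) hμν
  · exact h

set_option maxHeartbeats 1000000 in
lemma aux {H : Type*} [NormedAddCommGroup H] [InnerProductSpace ℂ H]
    [CompleteSpace H] (T : H →L[ℂ] H) (hT : T.IsPositive) (hAM : AbsMinAttains T)
    (a b : ℕ → ℝ) (ha : Monotone a) (hb : Monotone b)
    (f g : ℕ → H) (hf : Orthonormal ℂ f) (hg : Orthonormal ℂ g)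
    (hfe : ∀ n, T (f n) = (a n : ℂ) • f n) (hge : ∀ n, T (g n) = (b n : ℂ) • g n)
    (A B : ℝ) (hA : Tendsto a atTop (nhds A)) (hB : Tendsto b atTop (nhds B))
    (hAB : A < B) : False := by
  classical
  have hsym : (T : H →ₗ[ℂ] H).IsSymmetric := hT.isSelfAdjoint.isSymmetric
  have hre : ∀ z : ℂ, ((starRingEnd ℂ) z * z).re = ‖z‖ ^ 2 := by
    intro z
    rw [mul_comm, Complex.mul_conj, Complex.ofReal_re, Complex.normSq_eq_norm_sq]
  -- eigenvalues are nonnegative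
  have ha0 : ∀ n, 0 ≤ a n := by
    intro n
    have h0 := hT.2 (f n)
    have : T.reApplyInnerSelf (f n) = a n := by
      simp only [ContinuousLinearMap.reApplyInnerSelf, hfe n, inner_smul_left,
        Complex.conj_ofReal]
      have h1 : ⟪f n, f n⟫ = 1 := by
        rw [inner_self_eq_norm_sq_to_K (𝕜 := ℂ) (f n), hf.1 n]; norm_num
      rw [h1]; simp
    rwa [this] at h0
  have hb0 : ∀ n, 0 ≤ b n := by
    intro n
    have h0 := hT.2 (g n)
    have : T.reApplyInnerSelf (g n) = b n := by
      simp only [ContinuousLinearMap.reApplyInnerSelf, hge n, inner_smul_left,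
        Complex.conj_ofReal]
      have h1 : ⟪g n, g n⟫ = 1 := by
        rw [inner_self_eq_norm_sq_to_K (𝕜 := ℂ) (g n), hg.1 n]; norm_num
      rw [h1]; simp
    rwa [this] at h0
  have haA : ∀ n, a n ≤ A := fun n => ha.ge_of_tendsto hA n
  have hA0 : 0 ≤ A := le_trans (ha0 0) (haA 0)
  set c : ℝ := (A + B) / 2 with hc
  have hAc : A < c := by rw [hc]; linarith
  have hcB : c < B := by rw [hc]; linarith
  obtain ⟨N, hN⟩ : ∃ N, c < b N := (hB.eventually (eventually_gt_nhds hcB)).exists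
  have hbc : ∀ n, c < b (N + n) := fun n => lt_of_lt_of_le hN (hb (Nat.le_add_right N n))
  have hc0 : 0 < c := lt_of_le_of_lt hA0 hAc
  set t : ℕ → ℝ := fun n => A ^ 2 + (c ^ 2 - A ^ 2) * (1 / (n + 1)) with htdef
  have hca : A ^ 2 < c ^ 2 := by nlinarith
  have hpos1 : ∀ n : ℕ, (0:ℝ) < 1 / (n + 1) := by intro n; positivity
  have hle1 : ∀ n : ℕ, (1:ℝ) / (n + 1) ≤ 1 := by
    intro n
    rw [div_le_one (by positivity)]
    have : (0:ℝ) ≤ n := Nat.cast_nonneg n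
    linarith
  have ht1 : ∀ n, A ^ 2 < t n := by
    intro n; have := hpos1 n; simp only [htdef]; nlinarith
  have ht2 : ∀ n, t n ≤ c ^ 2 := by
    intro n; have := hle1 n; simp only [htdef]; nlinarith
  have ht0 : ∀ n, 0 < t n := fun n => lt_of_le_of_lt (by positivity) (ht1 n)
  have htb : ∀ n, t n < b (N + n) ^ 2 := by
    intro n; have h1 := hbc n; have h2 := ht2 n; nlinarith
  have htlim : Tendsto t atTop (nhds (A ^ 2)) := by
    have h0 := tendsto_one_div_add_atTop_nhds_zero_nat (𝕜 := ℝ)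
    have h1 := (h0.const_mul (c ^ 2 - A ^ 2)).const_add (A ^ 2)
    simpa [htdef] using h1
  have hat : ∀ n, a n ^ 2 < t n :=
    fun n => lt_of_le_of_lt (by nlinarith [ha0 n, haA n]) (ht1 n)
  set d : ℕ → ℝ := fun n => b (N + n) ^ 2 - a n ^ 2 with hddef
  have hd0 : ∀ n, 0 < d n := by
    intro n; have := htb n; have := hat n; simp only [hddef]; linarith
  set α : ℕ → ℝ := fun n => Real.sqrt ((b (N + n) ^ 2 - t n) / d n) with hαdef
  set β : ℕ → ℝ := fun n => Real.sqrt ((t n - a n ^ 2) / d n) with hβdef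
  have hα2 : ∀ n, α n ^ 2 = (b (N + n) ^ 2 - t n) / d n := by
    intro n
    exact Real.sq_sqrt (div_nonneg (by have := htb n; linarith) (le_of_lt (hd0 n)))
  have hβ2 : ∀ n, β n ^ 2 = (t n - a n ^ 2) / d n := by
    intro n
    exact Real.sq_sqrt (div_nonneg (by have := hat n; linarith) (le_of_lt (hd0 n)))
  have hαβ1 : ∀ n, α n ^ 2 + β n ^ 2 = 1 := by
    intro n
    rw [hα2 n, hβ2 n, ← add_div]
    have he : b (N + n) ^ 2 - t n + (t n - a n ^ 2) = d n := by simp only [hddef]; ring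
    rw [he, div_self (ne_of_gt (hd0 n))]
  have hαβt : ∀ n, (α n * a n) ^ 2 + (β n * b (N + n)) ^ 2 = t n := by
    intro n
    have hdne : d n ≠ 0 := ne_of_gt (hd0 n)
    rw [mul_pow, mul_pow, hα2 n, hβ2 n]
    field_simp
    simp only [hddef]
    ring
  -- the combined vectors
  set h : ℕ → H := fun n => (α n : ℂ) • f n + (β n : ℂ) • g (N + n) with hhdef
  have habne : ∀ m n, a m ≠ b (N + n) := by
    intro m n
    have h1 := haA m; have h2 := hbc n
    intro he; rw [he] at h1; linarith
  have hfg : ∀ m n, ⟪f m, g (N + n)⟫ = 0 :=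
    fun m n => eig_orth T hsym (hfe m) (hge (N + n)) (habne m n)
  have hgf : ∀ m n, ⟪g (N + m), f n⟫ = 0 := by
    intro m n; rw [← inner_conj_symm, hfg n m]; simp
  have hfo := orthonormal_iff_ite.mp hf
  have hgo := orthonormal_iff_ite.mp hg
  have hNadd : ∀ i j : ℕ, (N + i = N + j) = (i = j) := by
    intro i j; simp only [eq_iff_iff]; omega
  have hh : Orthonormal ℂ h := by
    rw [orthonormal_iff_ite]
    intro i j
    simp only [hhdef, inner_add_left, inner_add_right, inner_smul_left, inner_smul_right,
      Complex.conj_ofReal, hfo, hgo, hfg, hgf, mul_zero, add_zero, zero_add, hNadd]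
    by_cases hij : i = j
    · subst hij
      norm_num
      have h2 : (α i * α i + β i * β i : ℝ) = 1 := by nlinarith [hαβ1 i]
      exact_mod_cast h2
    · simp [hij]
  set u : ℕ → H := fun n => ((α n * a n : ℝ) : ℂ) • f n + ((β n * b (N + n) : ℝ) : ℂ) • g (N + n)
    with hudef
  have hThu : ∀ n, T (h n) = u n := by
    intro n
    simp only [hhdef, hudef, map_add, map_smul, hfe, hge, smul_smul]
    push_cast
    ring_nf
  have hui : ∀ i j, ⟪u i, u j⟫ = if i = j then (t j : ℂ) else 0 := by
    intro i j
    simp only [hudef, inner_add_left, inner_add_right, inner_smul_left, inner_smul_right,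
      Complex.conj_ofReal, hfo, hgo, hfg, hgf, mul_zero, add_zero, zero_add, hNadd]
    by_cases hij : i = j
    · subst hij
      norm_num
      have h2 : (α i * a i * (α i * a i) + β i * b (N + i) * (β i * b (N + i)) : ℝ) = t i := by
        nlinarith [hαβt i]
      exact_mod_cast h2
    · simp [hij]
  have hst0 : ∀ n, (0:ℝ) < Real.sqrt (t n) := fun n => Real.sqrt_pos.mpr (ht0 n)
  set e : ℕ → H := fun n => (((Real.sqrt (t n))⁻¹ : ℝ) : ℂ) • u n with hedef
  have hue : ∀ n, u n = ((Real.sqrt (t n) : ℝ) : ℂ) • e n := by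
    intro n
    rw [hedef, smul_smul, ← Complex.ofReal_mul, mul_inv_cancel₀ (ne_of_gt (hst0 n))]
    simp
  have he : Orthonormal ℂ e := by
    rw [orthonormal_iff_ite]
    intro i j
    simp only [hedef, inner_smul_left, inner_smul_right, Complex.conj_ofReal, hui]
    by_cases hij : i = j
    · subst hij
      norm_num
      have h2 : ((Real.sqrt (t i))⁻¹ * ((Real.sqrt (t i))⁻¹ * t i) : ℝ) = 1 := by
        rw [← mul_assoc, ← mul_inv, Real.mul_self_sqrt (le_of_lt (ht0 i)),
          inv_mul_cancel₀ (ne_of_gt (ht0 i))]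
      exact_mod_cast h2
    · simp [hij]
  have hnormu : ∀ n, ‖u n‖ = Real.sqrt (t n) := by
    intro n
    rw [hue n, norm_smul, he.1 n, mul_one, Complex.norm_real]
    exact Real.norm_of_nonneg (Real.sqrt_nonneg _)
  set S : Submodule ℂ H := Submodule.span ℂ (Set.range h) with hSdef
  set M : Submodule ℂ H := S.topologicalClosure with hMdef
  have KEY : ∀ s : Finset ℕ, ∀ x ∈ M,
      A ^ 2 * ‖x‖ ^ 2 + ∑ n ∈ s, (t n - A ^ 2) * ‖⟪h n, x⟫‖ ^ 2 ≤ ‖T x‖ ^ 2 := by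
    intro s
    have hclosed : IsClosed {x : H |
        A ^ 2 * ‖x‖ ^ 2 + ∑ n ∈ s, (t n - A ^ 2) * ‖⟪h n, x⟫‖ ^ 2 ≤ ‖T x‖ ^ 2} := by
      apply isClosed_le
      · apply Continuous.add
        · exact continuous_const.mul (continuous_norm.pow 2)
        · apply continuous_finset_sum
          intro n _
          exact continuous_const.mul
            (((Continuous.inner continuous_const continuous_id).norm).pow 2)
      · exact (T.continuous.norm).pow 2
    have hspan : (S : Set H) ⊆ {x : H |
        A ^ 2 * ‖x‖ ^ 2 + ∑ n ∈ s, (t n - A ^ 2) * ‖⟪h n, x⟫‖ ^ 2 ≤ ‖T x‖ ^ 2} := by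
      intro x hx
      obtain ⟨cc, hcc⟩ := Finsupp.mem_span_range_iff_exists_finsupp.mp hx
      set F : Finset ℕ := cc.support ∪ s with hFdef
      have hxF : x = ∑ n ∈ F, cc n • h n := by
        rw [← hcc]
        exact Finsupp.sum_of_support_subset cc Finset.subset_union_left _
          (fun i _ => zero_smul ℂ (h i))
      have hinner : ∀ n ∈ F, ⟪h n, x⟫ = cc n := by
        intro n hn
        rw [hxF]
        exact hh.inner_right_sum (fun m => cc m) hn
      have hnormx : ‖x‖ ^ 2 = ∑ n ∈ F, ‖cc n‖ ^ 2 := by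
        have h1 : ⟪x, x⟫ = ∑ n ∈ F, (starRingEnd ℂ) (cc n) * cc n := by
          rw [hxF]; exact hh.inner_sum _ _ F
        calc ‖x‖ ^ 2 = Complex.re ⟪x, x⟫ := (inner_self_eq_norm_sq (𝕜 := ℂ) x).symm
          _ = ∑ n ∈ F, Complex.re ((starRingEnd ℂ) (cc n) * cc n) := by
              rw [h1, Complex.re_sum]
          _ = ∑ n ∈ F, ‖cc n‖ ^ 2 := Finset.sum_congr rfl (fun n _ => hre _)
      have hTxF : T x = ∑ n ∈ F, (cc n * ((Real.sqrt (t n) : ℝ) : ℂ)) • e n := by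
        rw [hxF, map_sum]
        apply Finset.sum_congr rfl
        intro n _
        rw [map_smul, hThu n, hue n, smul_smul]
      have hnormTx : ‖T x‖ ^ 2 = ∑ n ∈ F, ‖cc n‖ ^ 2 * t n := by
        have h1 : ⟪T x, T x⟫ = ∑ n ∈ F,
            (starRingEnd ℂ) (cc n * ((Real.sqrt (t n) : ℝ) : ℂ))
              * (cc n * ((Real.sqrt (t n) : ℝ) : ℂ)) := by
          rw [hTxF]; exact he.inner_sum _ _ F
        calc ‖T x‖ ^ 2 = Complex.re ⟪T x, T x⟫ := (inner_self_eq_norm_sq (𝕜 := ℂ) (T x)).symm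
          _ = ∑ n ∈ F, Complex.re ((starRingEnd ℂ) (cc n * ((Real.sqrt (t n) : ℝ) : ℂ))
              * (cc n * ((Real.sqrt (t n) : ℝ) : ℂ))) := by rw [h1, Complex.re_sum]
          _ = ∑ n ∈ F, ‖cc n‖ ^ 2 * t n := by
              apply Finset.sum_congr rfl
              intro n _
              rw [hre, norm_mul, mul_pow, Complex.norm_real,
                Real.norm_of_nonneg (Real.sqrt_nonneg _), Real.sq_sqrt (le_of_lt (ht0 n))]
      rw [Set.mem_setOf_eq, hnormx, hnormTx]
      have hsum1 : ∀ n ∈ s, (t n - A ^ 2) * ‖⟪h n, x⟫‖ ^ 2 = (t n - A ^ 2) * ‖cc n‖ ^ 2 := by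
        intro n hn
        rw [hinner n (Finset.mem_union_right _ hn)]
      rw [Finset.sum_congr rfl hsum1]
      have hle : ∑ n ∈ s, (t n - A ^ 2) * ‖cc n‖ ^ 2
          ≤ ∑ n ∈ F, (t n - A ^ 2) * ‖cc n‖ ^ 2 :=
        Finset.sum_le_sum_of_subset_of_nonneg Finset.subset_union_right
          (fun n _ _ => mul_nonneg (by linarith [ht1 n]) (by positivity))
      have heq : A ^ 2 * ∑ n ∈ F, ‖cc n‖ ^ 2 + ∑ n ∈ F, (t n - A ^ 2) * ‖cc n‖ ^ 2
          = ∑ n ∈ F, ‖cc n‖ ^ 2 * t n := by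
        rw [Finset.mul_sum, ← Finset.sum_add_distrib]
        apply Finset.sum_congr rfl
        intro n _
        ring
      linarith
    intro x hx
    have : (M : Set H) ⊆ {x : H |
        A ^ 2 * ‖x‖ ^ 2 + ∑ n ∈ s, (t n - A ^ 2) * ‖⟪h n, x⟫‖ ^ 2 ≤ ‖T x‖ ^ 2} := by
      rw [hMdef, Submodule.topologicalClosure_coe]
      exact closure_minimal hspan hclosed
    exact this hx
  have hhM : ∀ n, h n ∈ M := fun n =>
    Submodule.le_topologicalClosure S (Submodule.subset_span (Set.mem_range_self n))
  have hMne : M ≠ ⊥ := by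
    rw [Submodule.ne_bot_iff]
    refine ⟨h 0, hhM 0, fun h0 => ?_⟩
    have := hh.1 0
    rw [h0, norm_zero] at this
    exact zero_ne_one this
  have hMclosed : IsClosed (M : Set H) := Submodule.isClosed_topologicalClosure S
  obtain ⟨x, hxM, hx1, hxmin⟩ := hAM M hMne hMclosed
  set Sset := (fun x => ‖T x‖) '' {x : H | x ∈ M ∧ ‖x‖ = 1} with hSset
  have hmmdef : mmodOn T M = sInf Sset := rfl
  have hlow : ∀ y ∈ Sset, A ≤ y := by
    rintro y ⟨z, ⟨hzM, hz1⟩, rfl⟩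
    have hk := KEY ∅ z hzM
    rw [Finset.sum_empty, hz1] at hk
    have hk2 : A ^ 2 ≤ ‖T z‖ ^ 2 := by linarith
    calc A = Real.sqrt (A ^ 2) := (Real.sqrt_sq hA0).symm
      _ ≤ Real.sqrt (‖T z‖ ^ 2) := Real.sqrt_le_sqrt hk2
      _ = ‖T z‖ := Real.sqrt_sq (norm_nonneg _)
  have hbdd : BddBelow Sset := ⟨A, hlow⟩
  have hmmlow : A ≤ mmodOn T M := by
    rw [hmmdef]
    exact le_csInf ⟨_, ⟨h 0, ⟨hhM 0, hh.1 0⟩, rfl⟩⟩ hlow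
  have hup : ∀ n, mmodOn T M ≤ Real.sqrt (t n) := by
    intro n
    have hmem : Real.sqrt (t n) ∈ Sset := ⟨h n, ⟨hhM n, hh.1 n⟩, by
      show ‖T (h n)‖ = _
      rw [hThu n, hnormu n]⟩
    rw [hmmdef]
    exact csInf_le hbdd hmem
  have hsqrtlim : Tendsto (fun n => Real.sqrt (t n)) atTop (nhds A) := by
    have h1 := (Real.continuous_sqrt.continuousAt (x := A ^ 2)).tendsto.comp htlim
    rwa [Real.sqrt_sq hA0] at h1
  have hmmup : mmodOn T M ≤ A := ge_of_tendsto hsqrtlim (Eventually.of_forall hup)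
  have hmm : mmodOn T M = A := le_antisymm hmmup hmmlow
  rw [hmm] at hxmin
  have hcoef : ∀ n, ⟪h n, x⟫ = 0 := by
    intro n
    have hk := KEY {n} x hxM
    rw [hx1, Finset.sum_singleton, hxmin] at hk
    norm_num at hk
    have h3 : ‖⟪h n, x⟫‖ ^ 2 ≤ 0 := by
      nlinarith [ht1 n, sq_nonneg ‖⟪h n, x⟫‖]
    have h4 : ‖⟪h n, x⟫‖ ^ 2 = 0 :=
      le_antisymm h3 (sq_nonneg _)
    have h5 : ‖⟪h n, x⟫‖ = 0 := by
      exact pow_eq_zero_iff two_ne_zero |>.mp h4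
    exact norm_eq_zero.mp h5
  have hxker : S ≤ LinearMap.ker ((innerSL ℂ x : H →L[ℂ] ℂ) : H →ₗ[ℂ] ℂ) := by
    rw [hSdef, Submodule.span_le]
    rintro y ⟨n, rfl⟩
    simp only [SetLike.mem_coe, LinearMap.mem_ker]
    show ⟪x, h n⟫ = 0
    rw [← inner_conj_symm, hcoef n, map_zero]
  have hMker : M ≤ LinearMap.ker ((innerSL ℂ x : H →L[ℂ] ℂ) : H →ₗ[ℂ] ℂ) :=
    Submodule.topologicalClosure_minimal S hxker (ContinuousLinearMap.isClosed_ker _)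
  have hxx : ⟪x, x⟫ = 0 := hMker hxM
  have hx0 : x = 0 := inner_self_eq_zero.mp hxx
  rw [hx0, norm_zero] at hx1
  exact zero_ne_one hx1

set_option maxHeartbeats 1000000 in
theorem stmt8 {H : Type*} [NormedAddCommGroup H] [InnerProductSpace ℂ H]
    [CompleteSpace H] (T : H →L[ℂ] H) (hT : T.IsPositive) (hAM : AbsMinAttains T)
    (a b : ℕ → ℝ) (ha : Monotone a) (hb : Monotone b)
    (f g : ℕ → H) (hf : Orthonormal ℂ f) (hg : Orthonormal ℂ g)
    (hfe : ∀ n, T (f n) = (a n : ℂ) • f n) (hge : ∀ n, T (g n) = (b n : ℂ) • g n)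
    (A B : ℝ) (hA : Tendsto a atTop (nhds A)) (hB : Tendsto b atTop (nhds B)) :
    A = B := by
  by_contra hne
  rcases lt_or_gt_of_ne hne with h' | h'
  · exact aux T hT hAM a b ha hb f g hf hg hfe hge A B hA hB h'
  · exact aux T hT hAM b a hb ha g f hg hf hge hfe B A hB hA h'
end

section
/- Let T be a positive absolutely minimum attaining operator on H. Then the point spectrum σ_p(T) is countable. -/
open ContinuousLinearMap Filter Topology

local notation "⟪" x ", " y "⟫" => @inner ℂ _ _ x y

lemma no_strictAnti_eig {H : Type*} [NormedAddCommGroup H] [InnerProductSpace ℂ H]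
    [CompleteSpace H] (T : H →L[ℂ] H) (hT : T.IsPositive) (hAM : AbsMinAttains T)
    (g : ℕ → ℝ) (hg : StrictAnti g)
    (hev : ∀ n, Module.End.HasEigenvalue (T : H →ₗ[ℂ] H) ((g n : ℂ))) : False := by
  classical
  have hSym : (T : H →ₗ[ℂ] H).IsSymmetric := hT.isSelfAdjoint.isSymmetric
  have hvec : ∀ n, ∃ v : H, ‖v‖ = 1 ∧ T v = (g n : ℂ) • v := by
    intro n
    obtain ⟨v, hv⟩ := (hev n).exists_hasEigenvector
    have hv0 : v ≠ 0 := hv.2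
    have hTv : T v = (g n : ℂ) • v := hv.apply_eq_smul
    refine ⟨‖v‖⁻¹ • v, ?_, ?_⟩
    · rw [norm_smul, norm_inv, norm_norm, inv_mul_cancel₀ (norm_ne_zero_iff.mpr hv0)]
    · rw [T.map_smul_of_tower, hTv, smul_comm]
  choose e he1 hTe using hvec
  have hg0 : ∀ n, 0 ≤ g n := by
    intro n
    have h1 := hT.inner_nonneg_left (e n)
    rw [hTe n, inner_smul_left] at h1
    have h2 : ⟪e n, e n⟫ = 1 := by
      rw [inner_self_eq_norm_sq_to_K, he1 n]; norm_num
    rw [h2, mul_one] at h1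
    simpa using h1
  set lam : ℝ := ⨅ n, g n with hlam
  have hbdd : BddBelow (Set.range g) := ⟨0, by rintro _ ⟨n, rfl⟩; exact hg0 n⟩
  have hlamle : ∀ n, lam ≤ g n := fun n => ciInf_le hbdd n
  have hlam0 : 0 ≤ lam := le_ciInf hg0
  have hlamlt : ∀ n, lam < g n := fun n => lt_of_le_of_lt (hlamle (n+1)) (hg (Nat.lt_succ_self n))
  have he : Orthonormal ℂ e := by
    rw [orthonormal_iff_ite]
    intro i j
    by_cases hij : i = j
    · subst hij
      simp [inner_self_eq_norm_sq_to_K, he1 i]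
    · have h1 := hSym (e i) (e j)
      simp only [ContinuousLinearMap.coe_coe] at h1
      rw [hTe i, hTe j, inner_smul_left, inner_smul_right, Complex.conj_ofReal] at h1
      have hne : (g i : ℂ) ≠ (g j : ℂ) := by
        exact_mod_cast fun h => hij (hg.injective (by exact_mod_cast h))
      have h3 : ((g i : ℂ) - g j) * ⟪e i, e j⟫ = 0 := by linear_combination h1
      simp only [hij, if_false]
      rcases mul_eq_zero.mp h3 with h | h
      · exact absurd (sub_eq_zero.mp h) hne
      · exact h

  set M := (Submodule.span ℂ (Set.range e)).topologicalClosure with hM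
  have heM : ∀ n, e n ∈ M :=
    fun n => Submodule.le_topologicalClosure _ (Submodule.subset_span (Set.mem_range_self n))
  have hkey : ∀ N : ℕ, ∀ x ∈ M,
      lam^2 * ‖x‖^2 + (g N ^ 2 - lam^2) * ‖⟪e N, x⟫‖^2 ≤ ‖T x‖^2 := by
    intro N
    have hclosed : IsClosed
        {x : H | lam^2 * ‖x‖^2 + (g N ^ 2 - lam^2) * ‖⟪e N, x⟫‖^2 ≤ ‖T x‖^2} := by
      apply isClosed_le
      · exact (continuous_const.mul ((continuous_norm).pow 2)).add
          (continuous_const.mul (((innerSL ℂ (e N)).continuous.norm).pow 2))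
      · exact (T.continuous.norm).pow 2
    have hsub : (Submodule.span ℂ (Set.range e) : Set H) ⊆
        {x : H | lam^2 * ‖x‖^2 + (g N ^ 2 - lam^2) * ‖⟪e N, x⟫‖^2 ≤ ‖T x‖^2} := by
      intro x hx
      rw [SetLike.mem_coe, Finsupp.mem_span_range_iff_exists_finsupp] at hx
      obtain ⟨c, hc⟩ := hx
      set s : Finset ℕ := c.support ∪ {N} with hs
      have hNs : N ∈ s := Finset.mem_union_right _ (Finset.mem_singleton_self N)
      have hxs : x = ∑ i ∈ s, c i • e i := by
        rw [← hc, Finsupp.sum]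
        exact Finset.sum_subset Finset.subset_union_left
          (fun i _ hni => by rw [Finsupp.notMem_support_iff.mp hni, zero_smul])
      have hnormx : ‖x‖^2 = ∑ i ∈ s, ‖c i‖^2 := by
        have h1 : ⟪x, x⟫ = (((∑ i ∈ s, ‖c i‖^2 : ℝ)) : ℂ) := by
          rw [hxs, he.inner_sum]
          push_cast
          refine Finset.sum_congr rfl (fun i _ => ?_)
          rw [RCLike.conj_mul]; norm_cast
        have h2 := congrArg Complex.re h1
        rw [← inner_self_eq_norm_sq (𝕜 := ℂ)]
        simpa [← Complex.ofReal_pow, ← Complex.ofReal_mul] using h2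
      have hTx : T x = ∑ i ∈ s, (c i * (g i : ℂ)) • e i := by
        rw [hxs, map_sum]
        exact Finset.sum_congr rfl (fun i _ => by
          rw [map_smul, hTe i, smul_smul])
      have hnormTx : ‖T x‖^2 = ∑ i ∈ s, (‖c i‖ * g i)^2 := by
        have h1 : ⟪T x, T x⟫ = (((∑ i ∈ s, (‖c i‖ * g i)^2 : ℝ)) : ℂ) := by
          rw [hTx, he.inner_sum]
          push_cast
          refine Finset.sum_congr rfl (fun i _ => ?_)
          rw [RCLike.conj_mul]
          rw [norm_mul, Complex.norm_real, Real.norm_eq_abs, abs_of_nonneg (hg0 i)]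
          norm_cast
        have h2 := congrArg Complex.re h1
        rw [← inner_self_eq_norm_sq (𝕜 := ℂ)]
        simpa [← Complex.ofReal_pow, ← Complex.ofReal_mul] using h2
      have hinner : ⟪e N, x⟫ = c N := by
        rw [hxs]; exact he.inner_right_sum c hNs
      show lam^2 * ‖x‖^2 + (g N ^ 2 - lam^2) * ‖⟪e N, x⟫‖^2 ≤ ‖T x‖^2
      rw [hnormx, hnormTx, hinner]
      have hsingle : ‖c N‖^2 * (g N^2 - lam^2) ≤ ∑ i ∈ s, ‖c i‖^2 * (g i^2 - lam^2) :=
        Finset.single_le_sum (f := fun i => ‖c i‖^2 * (g i^2 - lam^2))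
          (fun i _ => mul_nonneg (sq_nonneg _)
            (sub_nonneg.mpr (pow_le_pow_left₀ hlam0 (le_of_lt (hlamlt i)) 2))) hNs
      have hsplit : ∑ i ∈ s, ‖c i‖^2 * (g i^2 - lam^2)
          = ∑ i ∈ s, (‖c i‖ * g i)^2 - lam^2 * ∑ i ∈ s, ‖c i‖^2 := by
        rw [Finset.mul_sum, ← Finset.sum_sub_distrib]
        exact Finset.sum_congr rfl (fun i _ => by ring)
      rw [hsplit] at hsingle
      linarith
    intro x hx
    have hxc : x ∈ closure (Submodule.span ℂ (Set.range e) : Set H) := by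
      rwa [← Submodule.topologicalClosure_coe]
    exact closure_minimal hsub hclosed hxc

  have hMne : M ≠ ⊥ := by
    intro h
    have h0 : e 0 ∈ (⊥ : Submodule ℂ H) := h ▸ heM 0
    rw [Submodule.mem_bot] at h0
    have := he1 0
    rw [h0, norm_zero] at this
    exact zero_ne_one this
  have hMclosed : IsClosed (M : Set H) := Submodule.isClosed_topologicalClosure _
  obtain ⟨x, hxM, hx1, hxmin⟩ : MinAttainsOn T M := hAM M hMne hMclosed
  have hbdd2 : BddBelow ((fun x => ‖T x‖) '' {x : H | x ∈ M ∧ ‖x‖ = 1}) :=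
    ⟨0, by rintro _ ⟨z, _, rfl⟩; exact norm_nonneg _⟩
  have hmle : mmodOn T M ≤ lam := by
    apply le_ciInf (f := g)
    intro n
    have hmem : g n ∈ ((fun x => ‖T x‖) '' {x : H | x ∈ M ∧ ‖x‖ = 1}) := by
      refine ⟨e n, ⟨heM n, he1 n⟩, ?_⟩
      show ‖T (e n)‖ = g n
      rw [hTe n, norm_smul, he1 n, mul_one, Complex.norm_real, Real.norm_eq_abs,
        abs_of_nonneg (hg0 n)]
    exact csInf_le hbdd2 hmem
  have hxne : x ≠ 0 := fun h => by rw [h, norm_zero] at hx1; exact zero_ne_one hx1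
  have hcomp : ∃ N, ⟪e N, x⟫ ≠ 0 := by
    by_contra hc
    push_neg at hc
    have hker : Submodule.span ℂ (Set.range e) ≤ LinearMap.ker (innerSL ℂ x : H →ₗ[ℂ] ℂ) := by
      rw [Submodule.span_le]
      rintro _ ⟨n, rfl⟩
      simp only [SetLike.mem_coe, LinearMap.mem_ker]
      show ⟪x, e n⟫ = 0
      rw [← inner_conj_symm, hc n, map_zero]
    have hxker : x ∈ LinearMap.ker (innerSL ℂ x : H →ₗ[ℂ] ℂ) :=
      Submodule.topologicalClosure_minimal _ hker (ContinuousLinearMap.isClosed_ker _) hxM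
    have h0 : ⟪x, x⟫ = 0 := hxker
    exact hxne (inner_self_eq_zero.mp h0)
  obtain ⟨N, hN⟩ := hcomp
  have h4 := hkey N x hxM
  rw [hx1] at h4
  have h5 : 0 < ‖⟪e N, x⟫‖^2 := pow_pos (norm_pos_iff.mpr hN) 2
  have h6 : lam^2 < g N^2 := by nlinarith [hlamlt N, hlam0]
  have h7 : ‖T x‖ ≤ lam := hxmin ▸ hmle
  have h8 : ‖T x‖^2 ≤ lam^2 := by nlinarith [norm_nonneg (T x)]
  nlinarith

theorem stmt10 {H : Type*} [NormedAddCommGroup H] [InnerProductSpace ℂ H]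
    [CompleteSpace H] (T : H →L[ℂ] H) (hT : T.IsPositive) (hAM : AbsMinAttains T) :
    {μ : ℂ | Module.End.HasEigenvalue (T : H →ₗ[ℂ] H) μ}.Countable := by
  classical
  set S : Set ℝ := {r : ℝ | Module.End.HasEigenvalue (T : H →ₗ[ℂ] H) ((r : ℂ))} with hS
  have hSym : (T : H →ₗ[ℂ] H).IsSymmetric := hT.isSelfAdjoint.isSymmetric
  have hsub : {μ : ℂ | Module.End.HasEigenvalue (T : H →ₗ[ℂ] H) μ} ⊆
      (fun r : ℝ => (r : ℂ)) '' S := by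
    intro μ hμ
    have hreal : (starRingEnd ℂ) μ = μ := hSym.conj_eigenvalue_eq_self hμ
    have hμre : μ = (μ.re : ℂ) := (Complex.conj_eq_iff_re.mp hreal).symm
    exact ⟨μ.re, by rw [hS]; simpa [← hμre] using hμ, hμre.symm⟩
  refine Set.Countable.mono hsub (Set.Countable.image ?_ _)
  -- every point of S is isolated on the right within S
  have hisol : ∀ s ∈ S, ∃ t, s < t ∧ ∀ u ∈ S, ¬(s < u ∧ u < t) := by
    intro s hs
    by_contra hcon
    push_neg at hcon
    have hstep : ∀ t : {t : ℝ // s < t}, ∃ u : {t : ℝ // s < t}, (u : ℝ) ∈ S ∧ (u : ℝ) < t := by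
      rintro ⟨t, ht⟩
      obtain ⟨u, huS, hsu, hut⟩ := hcon t ht
      exact ⟨⟨u, hsu⟩, huS, hut⟩
    choose F hFS hFlt using hstep
    set seq : ℕ → {t : ℝ // s < t} := fun n => F^[n + 1] ⟨s + 1, lt_add_one s⟩ with hseq
    have hseqsucc : ∀ n, seq (n + 1) = F (seq n) := by
      intro n
      rw [hseq]
      simp only [Function.iterate_succ_apply']
    have hanti : StrictAnti (fun n => (seq n : ℝ)) := by
      apply strictAnti_nat_of_succ_lt
      intro n
      rw [hseqsucc n]
      exact hFlt (seq n)
    have hmem : ∀ n, ((seq n : ℝ) : ℂ) ∈ {μ : ℂ | Module.End.HasEigenvalue (T : H →ₗ[ℂ] H) μ} := by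
      intro n
      cases n with
      | zero => exact hFS _
      | succ m => rw [hseqsucc m]; exact hFS _
    exact no_strictAnti_eig T hT hAM (fun n => (seq n : ℝ)) hanti hmem
  choose! y hy1 hy2 using hisol
  have hdisj : S.PairwiseDisjoint fun s => Set.Ioo s (y s) := by
    intro a ha b hb hab
    rcases lt_or_gt_of_ne hab with h | h
    · have hyb : y a ≤ b := by
        by_contra hyb
        push_neg at hyb
        exact hy2 a ha b hb ⟨h, hyb⟩
      refine Set.disjoint_left.mpr (fun u hu hu' => ?_)
      exact absurd (lt_of_lt_of_le hu.2 hyb) (not_lt.mpr (le_of_lt hu'.1))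
    · have hya : y b ≤ a := by
        by_contra hya
        push_neg at hya
        exact hy2 b hb a ha ⟨h, hya⟩
      refine Set.disjoint_left.mpr (fun u hu hu' => ?_)
      exact absurd (lt_of_lt_of_le hu'.2 hya) (not_lt.mpr (le_of_lt hu.1))
  exact hdisj.countable_of_Ioo hy1
end

section
/- A positive absolutely minimum attaining operator on an infinite dimensional complex Hilbert space can have at most one eigenvalue whose eigenspace is infinite dimensional. -/
set_option maxHeartbeats 1000000
open scoped ComplexInnerProductSpace


open ContinuousLinearMap Filter Topology

lemma exists_on_seq {E : Type*} [NormedAddCommGroup E] [InnerProductSpace ℂ E]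
    (h : ¬ FiniteDimensional ℂ E) : ∃ e : ℕ → E, Orthonormal ℂ e := by
  have b := Module.Basis.ofVectorSpace ℂ E
  have hinf : Infinite (Module.Basis.ofVectorSpaceIndex ℂ E) := by
    rw [Set.infinite_coe_iff]
    intro hfin
    haveI := hfin.fintype
    exact h (Module.Finite.of_basis b)
  set g : ℕ → E := b ∘ (Infinite.natEmbedding _) with hg
  have hgli : LinearIndependent ℂ g :=
    b.linearIndependent.comp _ (Infinite.natEmbedding _).injective
  exact ⟨InnerProductSpace.gramSchmidtNormed ℂ g, InnerProductSpace.gramSchmidtNormed_orthonormal hgli⟩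

lemma exists_on_seq_mem {H : Type*} [NormedAddCommGroup H] [InnerProductSpace ℂ H]
    (V : Submodule ℂ H) (h : ¬ FiniteDimensional ℂ V) :
    ∃ e : ℕ → H, Orthonormal ℂ e ∧ ∀ n, e n ∈ V := by
  obtain ⟨e, he⟩ := exists_on_seq h
  exact ⟨fun n => (e n : H), he.comp_linearIsometry V.subtypeₗᵢ, fun n => (e n).2⟩

lemma key {H : Type*} [NormedAddCommGroup H] [InnerProductSpace ℂ H] [CompleteSpace H]
    (T : H →L[ℂ] H) (hT : T.IsPositive) (hAM : AbsMinAttains T)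
    {a b : ℝ} (ha : 0 ≤ a) (hab : a < b)
    (hμ : ¬ FiniteDimensional ℂ (Module.End.eigenspace (T : H →ₗ[ℂ] H) (a : ℂ)))
    (hν : ¬ FiniteDimensional ℂ (Module.End.eigenspace (T : H →ₗ[ℂ] H) (b : ℂ))) :
    False := by
  have hb : 0 < b := lt_of_le_of_lt ha hab
  set T' : H →ₗ[ℂ] H := (T : H →ₗ[ℂ] H) with hT'
  have hsym : T'.IsSymmetric := hT.1
  set Ea := Module.End.eigenspace T' (a : ℂ) with hEa
  set Eb := Module.End.eigenspace T' (b : ℂ) with hEb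
  -- orthogonality of the two eigenspaces
  have horth : ∀ {x y : H}, x ∈ Ea → y ∈ Eb → inner ℂ x y = (0 : ℂ) := by
    intro x y hx hy
    have hne : (a : ℂ) ≠ (b : ℂ) := by
      simp only [ne_eq, Complex.ofReal_inj]; exact ne_of_lt hab
    exact hsym.orthogonalFamily_eigenspaces hne ⟨x, hx⟩ ⟨y, hy⟩
  obtain ⟨f, hf_on, hf_mem⟩ := exists_on_seq_mem Ea hμ
  obtain ⟨e, he_on, he_mem⟩ := exists_on_seq_mem Eb hν
  set v : ℕ → H := fun n => e n + (n : ℂ) • f n with hv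
  set W : Submodule ℂ H := (Submodule.span ℂ (Set.range v)).topologicalClosure with hW
  set Ecl : Submodule ℂ H := (Submodule.span ℂ (Set.range e)).topologicalClosure with hEcl
  haveI : CompleteSpace Ecl :=
    IsClosed.completeSpace_coe (hs := Submodule.isClosed_topologicalClosure _)
  set Q := Ecl.orthogonalProjectionOnto with hQ
  -- f n ⊥ Ecl
  have hfE : ∀ n, f n ∈ Eclᗮ := by
    intro n
    rw [Submodule.mem_orthogonal]
    intro u hu
    rw [inner_eq_zero_symm]
    have hle : Ecl ≤ LinearMap.ker ((innerSL ℂ (f n) : H →L[ℂ] ℂ) : H →ₗ[ℂ] ℂ) := by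
      apply Submodule.topologicalClosure_minimal
      · rw [Submodule.span_le]
        rintro _ ⟨m, rfl⟩
        simp only [SetLike.mem_coe, LinearMap.mem_ker, ContinuousLinearMap.coe_coe,
          innerSL_apply_apply]
        exact horth (hf_mem n) (he_mem m)
      · exact ContinuousLinearMap.isClosed_ker _
    exact hle hu
  -- key identity on W
  have hid : ∀ x ∈ W, ‖T x‖ ^ 2 = a ^ 2 * ‖x‖ ^ 2 + (b ^ 2 - a ^ 2) * ‖(Q x : H)‖ ^ 2 := by
    have hS : ∀ x ∈ Submodule.span ℂ (Set.range v),
        ‖T x‖ ^ 2 = a ^ 2 * ‖x‖ ^ 2 + (b ^ 2 - a ^ 2) * ‖(Q x : H)‖ ^ 2 := by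
      intro x hx
      have hx' : x ∈ Submodule.span ℂ (Set.range e) ⊔ Submodule.span ℂ (Set.range f) := by
        refine Submodule.span_le.mpr ?_ hx
        rintro _ ⟨n, rfl⟩
        exact Submodule.add_mem _
          (Submodule.mem_sup_left (Submodule.subset_span (Set.mem_range_self n)))
          (Submodule.smul_mem _ _ (Submodule.mem_sup_right (Submodule.subset_span (Set.mem_range_self n))))
      obtain ⟨p, hp, q, hq, rfl⟩ := Submodule.mem_sup.mp hx'
      have hpb : p ∈ Eb := Submodule.span_le.mpr (by rintro _ ⟨n, rfl⟩; exact he_mem n) hp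
      have hqa : q ∈ Ea := Submodule.span_le.mpr (by rintro _ ⟨n, rfl⟩; exact hf_mem n) hq
      have hTp : T p = (b : ℂ) • p := Module.End.mem_eigenspace_iff.mp hpb
      have hTq : T q = (a : ℂ) • q := Module.End.mem_eigenspace_iff.mp hqa
      have hpq : inner ℂ p q = (0 : ℂ) := inner_eq_zero_symm.mp (horth hqa hpb)
      have hQp : (Q p : H) = p :=
        Submodule.starProjection_eq_self_iff.mpr (Submodule.le_topologicalClosure _ hp)
      have hQq : Q q = 0 :=
        Submodule.orthogonalProjectionOnto_apply_of_mem_orthogonal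
          (Submodule.span_le.mpr (by rintro _ ⟨n, rfl⟩; exact SetLike.mem_coe.mpr (hfE n)) hq)
      have hQx : (Q (p + q) : H) = p := by
        rw [map_add, hQq, add_zero, hQp]
      have hTx : T (p + q) = (b : ℂ) • p + (a : ℂ) • q := by rw [map_add, hTp, hTq]
      have hip : inner ℂ ((b : ℂ) • p) ((a : ℂ) • q) = (0 : ℂ) := by
        rw [inner_smul_left, inner_smul_right, hpq]; ring
      have hnx : ‖p + q‖ ^ 2 = ‖p‖ ^ 2 + ‖q‖ ^ 2 := by
        rw [@norm_add_sq ℂ, hpq]; simp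
      have hnT : ‖(b : ℂ) • p + (a : ℂ) • q‖ ^ 2 = b ^ 2 * ‖p‖ ^ 2 + a ^ 2 * ‖q‖ ^ 2 := by
        rw [@norm_add_sq ℂ, hip]
        simp only [map_zero, mul_zero, add_zero, norm_smul, Complex.norm_real,
          Real.norm_eq_abs, abs_of_nonneg ha, abs_of_pos hb, zero_mul]
        ring
      rw [hTx, hQx, hnT, hnx]
      ring
    intro x hx
    have hclosed : IsClosed {y : H |
        ‖T y‖ ^ 2 = a ^ 2 * ‖y‖ ^ 2 + (b ^ 2 - a ^ 2) * ‖(Q y : H)‖ ^ 2} := by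
      apply isClosed_eq
      · exact (T.continuous.norm).pow 2
      · apply Continuous.add
        · exact continuous_const.mul (continuous_norm.pow 2)
        · exact continuous_const.mul
            (((continuous_subtype_val.comp Q.continuous).norm).pow 2)
    have hsub : (W : Set H) ⊆ {y : H |
        ‖T y‖ ^ 2 = a ^ 2 * ‖y‖ ^ 2 + (b ^ 2 - a ^ 2) * ‖(Q y : H)‖ ^ 2} := by
      rw [hW, Submodule.topologicalClosure_coe]
      exact closure_minimal hS hclosed
    exact hsub hx
  -- x ∈ W with Q x = 0 implies x = 0
  have hef : ∀ m n : ℕ, inner ℂ (e m) (f n) = (0 : ℂ) :=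
    fun m n => inner_eq_zero_symm.mp (horth (hf_mem n) (he_mem m))
  have hinj : ∀ x ∈ W, (Q x : H) = 0 → x = 0 := by
    intro x hxW hQx0
    have hQx0' : Q x = 0 := Subtype.ext (by simpa using hQx0)
    have hxE : x ∈ Eclᗮ := Submodule.orthogonalProjectionOnto_eq_zero_iff.mp hQx0'
    have hex : ∀ n, inner ℂ (e n) x = (0 : ℂ) := fun n =>
      Submodule.inner_right_of_mem_orthogonal
        (Submodule.le_topologicalClosure _ (Submodule.subset_span (Set.mem_range_self n))) hxE
    have hfx : ∀ n, inner ℂ (f n) x = (0 : ℂ) := by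
      intro n
      have hWle : W ≤ LinearMap.ker (((innerSL ℂ (f n) : H →L[ℂ] ℂ) - (n : ℂ) • innerSL ℂ (e n) : H →L[ℂ] ℂ) : H →ₗ[ℂ] ℂ) := by
        apply Submodule.topologicalClosure_minimal
        · rw [Submodule.span_le]
          rintro _ ⟨m, rfl⟩
          simp only [SetLike.mem_coe, LinearMap.mem_ker, ContinuousLinearMap.coe_coe,
            ContinuousLinearMap.sub_apply, ContinuousLinearMap.smul_apply, innerSL_apply_apply]
          show (inner ℂ (f n) (e m + (m : ℂ) • f m) : ℂ)
            - (n : ℂ) • inner ℂ (e n) (e m + (m : ℂ) • f m) = 0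
          rw [inner_add_right, inner_add_right, inner_smul_right, inner_smul_right,
            hef n m, inner_eq_zero_symm.mpr (hef m n), orthonormal_iff_ite.mp hf_on n m,
            orthonormal_iff_ite.mp he_on n m]
          by_cases h : n = m
          · subst h; simp
          · simp [h]
        · exact ContinuousLinearMap.isClosed_ker _
      have h := hWle hxW
      simp only [LinearMap.mem_ker, ContinuousLinearMap.coe_coe,
        ContinuousLinearMap.sub_apply, ContinuousLinearMap.smul_apply, innerSL_apply_apply] at h
      rw [sub_eq_zero] at h
      rw [h, hex n]
      simp
    have hvx : ∀ m, inner ℂ x (v m) = (0 : ℂ) := by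
      intro m
      rw [inner_eq_zero_symm]
      show (inner ℂ (e m + (m : ℂ) • f m) x : ℂ) = 0
      rw [inner_add_left, inner_smul_left, hex m, hfx m]
      simp
    have hWle2 : W ≤ LinearMap.ker ((innerSL ℂ x : H →L[ℂ] ℂ) : H →ₗ[ℂ] ℂ) := by
      apply Submodule.topologicalClosure_minimal
      · rw [Submodule.span_le]
        rintro _ ⟨m, rfl⟩
        simpa using hvx m
      · exact ContinuousLinearMap.isClosed_ker _
    have := hWle2 hxW
    simp only [LinearMap.mem_ker, ContinuousLinearMap.coe_coe, innerSL_apply_apply] at this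
    exact inner_self_eq_zero.mp this
  -- the normalized sequence
  have hvne : ∀ n, v n ≠ 0 := by
    intro n hn
    have h1 : inner ℂ (e n) (v n) = (1 : ℂ) := by
      show (inner ℂ (e n) (e n + (n : ℂ) • f n) : ℂ) = 1
      rw [inner_add_right, inner_smul_right, hef n n,
        orthonormal_iff_ite.mp he_on n n]
      simp
    rw [hn, inner_zero_right] at h1
    exact zero_ne_one h1
  have hvnorm : ∀ n : ℕ, ‖v n‖ ^ 2 = 1 + (n : ℝ) ^ 2 := by
    intro n
    have hip : inner ℂ (e n) ((n : ℂ) • f n) = (0 : ℂ) := by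
      rw [inner_smul_right, hef n n]; ring
    show ‖e n + (n : ℂ) • f n‖ ^ 2 = 1 + (n : ℝ) ^ 2
    rw [@norm_add_sq ℂ, hip]
    simp [he_on.1 n, hf_on.1 n, norm_smul]
  set w : ℕ → H := fun n => ((‖v n‖ : ℂ))⁻¹ • v n with hw
  have hwW : ∀ n, w n ∈ W := by
    intro n
    exact Submodule.smul_mem _ _ (Submodule.le_topologicalClosure _
      (Submodule.subset_span (Set.mem_range_self n)))
  have hwnorm : ∀ n, ‖w n‖ = 1 := by
    intro n
    simp only [hw]
    rw [norm_smul]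
    simp [norm_inv, hvne n]
  have hQw : ∀ n, ‖(Q (w n) : H)‖ ^ 2 = (1 + (n : ℝ) ^ 2)⁻¹ := by
    intro n
    have hQe : (Q (e n) : H) = e n :=
      Submodule.starProjection_eq_self_iff.mpr
        (Submodule.le_topologicalClosure _ (Submodule.subset_span (Set.mem_range_self n)))
    have hQf : Q (f n) = 0 :=
      Submodule.orthogonalProjectionOnto_apply_of_mem_orthogonal (hfE n)
    have hQv : (Q (v n) : H) = e n := by
      show (Q (e n + (n : ℂ) • f n) : H) = e n
      rw [map_add, map_smul, hQf, smul_zero, add_zero, hQe]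
    have : (Q (w n) : H) = ((‖v n‖ : ℂ))⁻¹ • e n := by
      show (Q (((‖v n‖ : ℂ))⁻¹ • v n) : H) = ((‖v n‖ : ℂ))⁻¹ • e n
      rw [map_smul]
      push_cast [hQv]
      rfl
    rw [this, norm_smul, he_on.1 n]
    have hvn : ‖v n‖ ≠ 0 := norm_ne_zero_iff.mpr (hvne n)
    rw [mul_one, norm_inv, Complex.norm_real, Real.norm_eq_abs,
      abs_of_nonneg (norm_nonneg _)]
    rw [inv_pow, hvnorm n]
  -- get the minimum attaining vector
  have hWne : W ≠ ⊥ := by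
    intro hbot
    have hv0 : v 0 ∈ W :=
      Submodule.le_topologicalClosure _ (Submodule.subset_span (Set.mem_range_self 0))
    rw [hbot, Submodule.mem_bot] at hv0
    exact hvne 0 hv0
  obtain ⟨x, hxW, hxn, hxm⟩ := hAM W hWne (Submodule.isClosed_topologicalClosure _)
  -- mmodOn ≤ ‖T (w n)‖
  have hle : ∀ n, ‖T x‖ ≤ ‖T (w n)‖ := by
    intro n
    rw [hxm]
    apply csInf_le
    · refine ⟨0, ?_⟩
      rintro r ⟨y, _, rfl⟩
      exact norm_nonneg _
    · exact ⟨w n, ⟨hwW n, hwnorm n⟩, rfl⟩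
  -- conclude
  have hQx : (Q x : H) = 0 := by
    have h2 : ∀ n : ℕ, ‖(Q x : H)‖ ^ 2 ≤ (1 + (n : ℝ) ^ 2)⁻¹ := by
      intro n
      have h3 := pow_le_pow_left₀ (norm_nonneg _) (hle n) 2
      rw [hid x hxW, hid (w n) (hwW n), hxn, hwnorm n, hQw n] at h3
      have hba : 0 < b ^ 2 - a ^ 2 := by nlinarith
      nlinarith
    have h4 : ‖(Q x : H)‖ ^ 2 ≤ 0 := by
      by_contra h5
      push_neg at h5
      set c := ‖(Q x : H)‖ ^ 2 with hc
      obtain ⟨n, hn⟩ := exists_nat_gt c⁻¹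
      have hpos : (0 : ℝ) < 1 + (n : ℝ) ^ 2 := by positivity
      have hcc : c * c⁻¹ = 1 := mul_inv_cancel₀ (ne_of_gt h5)
      have hdd : (1 + (n : ℝ) ^ 2) * (1 + (n : ℝ) ^ 2)⁻¹ = 1 := mul_inv_cancel₀ (ne_of_gt hpos)
      have h2n := h2 n
      nlinarith [sq_nonneg ((n : ℝ) - 1), mul_pos h5 hpos, sq_nonneg (n : ℝ)]
    have h6 : ‖(Q x : H)‖ = 0 := by nlinarith [norm_nonneg (Q x : H), sq_nonneg ‖(Q x : H)‖]
    simpa using h6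
  have := hinj x hxW hQx
  rw [this] at hxn
  simpa using hxn

theorem stmt11 {H : Type*} [NormedAddCommGroup H] [InnerProductSpace ℂ H]
    [CompleteSpace H] (hinf : ¬ FiniteDimensional ℂ H)
    (T : H →L[ℂ] H) (hT : T.IsPositive) (hAM : AbsMinAttains T) :
    ∀ μ ν : ℂ,
      ¬ FiniteDimensional ℂ (Module.End.eigenspace (T : H →ₗ[ℂ] H) μ) →
      ¬ FiniteDimensional ℂ (Module.End.eigenspace (T : H →ₗ[ℂ] H) ν) →
      μ = ν := by
  intro μ ν hμ hν
  have hsym : (T : H →ₗ[ℂ] H).IsSymmetric := hT.1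
  have hreal : ∀ γ : ℂ, ¬ FiniteDimensional ℂ (Module.End.eigenspace (T : H →ₗ[ℂ] H) γ) →
      γ = (γ.re : ℂ) ∧ 0 ≤ γ.re := by
    intro γ hγ
    have hne : Module.End.eigenspace (T : H →ₗ[ℂ] H) γ ≠ ⊥ := by
      intro h
      apply hγ
      rw [h]
      infer_instance
    have hev : Module.End.HasEigenvalue (T : H →ₗ[ℂ] H) γ :=
      Module.End.hasEigenvalue_iff.mpr hne
    have hconj : (starRingEnd ℂ) γ = γ := hsym.conj_eigenvalue_eq_self hev
    have hre : γ = (γ.re : ℂ) := (Complex.conj_eq_iff_re.mp hconj).symm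
    refine ⟨hre, ?_⟩
    obtain ⟨y, hy, hy0⟩ := (Submodule.ne_bot_iff _).mp hne
    have hTy : T y = γ • y := Module.End.mem_eigenspace_iff.mp hy
    have h1 := hT.re_inner_nonneg_left y
    rw [hTy, inner_smul_left] at h1
    have h2 : (inner ℂ y y : ℂ) = (‖y‖ ^ 2 : ℝ) := by
      rw [inner_self_eq_norm_sq_to_K]; norm_cast
    rw [h2, hconj] at h1
    have h3 : RCLike.re (γ * ((‖y‖ ^ 2 : ℝ) : ℂ)) = γ.re * ‖y‖ ^ 2 := by
      simp [Complex.mul_re, ← Complex.ofReal_pow]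
    rw [h3] at h1
    have hy2 : 0 < ‖y‖ ^ 2 := pow_pos (norm_pos_iff.mpr hy0) 2
    nlinarith
  obtain ⟨hμr, hμnn⟩ := hreal μ hμ
  obtain ⟨hνr, hνnn⟩ := hreal ν hν
  rcases lt_trichotomy μ.re ν.re with h | h | h
  · exact absurd (key T hT hAM hμnn h (hμr ▸ hμ) (hνr ▸ hν)) not_false
  · rw [hμr, hνr, h]
  · exact absurd (key T hT hAM hνnn h (hνr ▸ hν) (hμr ▸ hμ)) not_false
end

section
/- Let F be a finite rank bounded operator on a complex Hilbert space H. Then for every α ≥ 0, the operator αI - F is absolutely minimum attaining: its restriction to every nonzero closed subspace attains the minimum modulus. -/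
open ContinuousLinearMap Filter Topology
open scoped InnerProductSpace ComplexConjugate

section Helpers

variable {H1 H2 : Type*} [NormedAddCommGroup H1] [InnerProductSpace ℂ H1]
    [NormedAddCommGroup H2] [InnerProductSpace ℂ H2]

lemma exists_unit_of_ne_bot (M : Submodule ℂ H1) (h : M ≠ ⊥) : ∃ x, x ∈ M ∧ ‖x‖ = 1 := by
  obtain ⟨m, hmM, hm0⟩ := (Submodule.ne_bot_iff M).mp h
  refine ⟨((‖m‖ : ℂ))⁻¹ • m, M.smul_mem _ hmM, ?_⟩
  have hm : ‖m‖ ≠ 0 := norm_ne_zero_iff.mpr hm0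
  rw [norm_smul, norm_inv, Complex.norm_real, Real.norm_eq_abs, abs_of_nonneg (norm_nonneg m)]
  field_simp

lemma minAttainsOn_of_min (T : H1 →L[ℂ] H2) (M : Submodule ℂ H1)
    (x : H1) (hxM : x ∈ M) (hx : ‖x‖ = 1)
    (hmin : ∀ y, y ∈ M → ‖y‖ = 1 → ‖T x‖ ≤ ‖T y‖) : MinAttainsOn T M := by
  refine ⟨x, hxM, hx, ?_⟩
  have hle : IsLeast ((fun x => ‖T x‖) '' {x : H1 | x ∈ M ∧ ‖x‖ = 1}) ‖T x‖ := by
    constructor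
    · exact ⟨x, ⟨hxM, hx⟩, rfl⟩
    · rintro _ ⟨y, ⟨hyM, hy⟩, rfl⟩
      exact hmin y hyM hy
  rw [mmodOn, hle.csInf_eq]

lemma minAttainsOn_of_fd (T : H1 →L[ℂ] H2) (M : Submodule ℂ H1)
    (hM : M ≠ ⊥) [FiniteDimensional ℂ M] : MinAttainsOn T M := by
  have hC : IsCompact {x : H1 | x ∈ M ∧ ‖x‖ = 1} := by
    have heq : {x : H1 | x ∈ M ∧ ‖x‖ = 1} = Subtype.val '' (Metric.sphere (0 : M) 1) := by
      ext x
      constructor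
      · rintro ⟨hxM, hx⟩
        exact ⟨⟨x, hxM⟩, by simpa [Metric.mem_sphere, dist_zero_right] using hx, rfl⟩
      · rintro ⟨y, hy, rfl⟩
        exact ⟨y.2, by simpa [Metric.mem_sphere, dist_zero_right] using hy⟩
    rw [heq]
    exact (isCompact_sphere (0 : M) 1).image continuous_subtype_val
  obtain ⟨x, hxM, hx⟩ := exists_unit_of_ne_bot M hM
  obtain ⟨z, hz, hzmin⟩ := hC.exists_isMinOn ⟨x, hxM, hx⟩
    ((continuous_norm.comp T.continuous).continuousOn)
  exact minAttainsOn_of_min T M z hz.1 hz.2 fun y hyM hy => hzmin ⟨hyM, hy⟩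

end Helpers

set_option maxHeartbeats 1000000 in
theorem stmt13 {H : Type*} [NormedAddCommGroup H] [InnerProductSpace ℂ H]
    [CompleteSpace H] (F : H →L[ℂ] H)
    (hFr : FiniteDimensional ℂ (LinearMap.range (F : H →ₗ[ℂ] H))) :
    ∀ α : ℝ, 0 ≤ α → AbsMinAttains ((α : ℂ) • (1 : H →L[ℂ] H) - F) := by
  intro α hα M hM hMc
  set T : H →L[ℂ] H := ((α : ℂ) • (1 : H →L[ℂ] H) - F) with hT
  by_cases hfd : FiniteDimensional ℂ M
  · exact minAttainsOn_of_fd T M hM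
  -- infinite-dimensional case
  set N : Submodule ℂ H := M ⊓ LinearMap.ker (F : H →ₗ[ℂ] H) with hNdef
  have hNM : N ≤ M := inf_le_left
  have hNc : IsClosed (N : Set H) := hMc.inter (ContinuousLinearMap.isClosed_ker F)
  haveI : CompleteSpace N := hNc.completeSpace_coe
  set W : Submodule ℂ H := Nᗮ ⊓ M with hWdef
  have hWM : W ≤ M := inf_le_right
  have horthmem : ∀ d : H, d ∈ N → d ∈ Nᗮ → d = 0 := by
    intro d hdN hdO
    have : ⟪d, d⟫_ℂ = 0 := (Submodule.mem_orthogonal N d).mp hdO d hdN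
    exact inner_self_eq_zero.mp this
  haveI : FiniteDimensional ℂ W := by
    set g : W →ₗ[ℂ] LinearMap.range (F : H →ₗ[ℂ] H) :=
      (F.toLinearMap.domRestrict W).codRestrict (LinearMap.range (F : H →ₗ[ℂ] H))
        (fun x => LinearMap.mem_range_self _ _) with hgdef
    have hg : Function.Injective g := by
      intro a b hab
      have hFab : F (a : H) = F (b : H) := congrArg Subtype.val hab
      have hd : (a : H) - b ∈ N := by
        refine ⟨?_, ?_⟩
        · exact sub_mem (hWM a.2) (hWM b.2)
        · simp [LinearMap.mem_ker, map_sub, hFab]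
      have hdO : (a : H) - b ∈ Nᗮ := sub_mem a.2.1 b.2.1
      exact Subtype.ext (sub_eq_zero.mp (horthmem _ hd hdO))
    exact FiniteDimensional.of_injective g hg
  have hNbot : N ≠ ⊥ := by
    intro h
    apply hfd
    set g : M →ₗ[ℂ] LinearMap.range (F : H →ₗ[ℂ] H) :=
      (F.toLinearMap.domRestrict M).codRestrict (LinearMap.range (F : H →ₗ[ℂ] H))
        (fun x => LinearMap.mem_range_self _ _) with hgdef
    have hg : Function.Injective g := by
      intro a b hab
      have hFab : F (a : H) = F (b : H) := congrArg Subtype.val hab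
      have hd : (a : H) - b ∈ N := by
        refine ⟨sub_mem a.2 b.2, ?_⟩
        simp [LinearMap.mem_ker, map_sub, hFab]
      rw [h] at hd
      exact Subtype.ext (sub_eq_zero.mp (Submodule.mem_bot ℂ |>.mp hd))
    exact FiniteDimensional.of_injective g hg
  obtain ⟨e, heN, he1⟩ := exists_unit_of_ne_bot N hNbot
  set Q : H → H := fun w => (Submodule.orthogonalProjectionOnto N w : H) with hQdef
  have hQmem : ∀ w : H, Q w ∈ N := fun w => (Submodule.orthogonalProjectionOnto N w).2
  have hinner : ∀ u, u ∈ N → ∀ w : H, ⟪u, w⟫_ℂ = ⟪u, Q w⟫_ℂ := by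
    intro u hu w
    have h1 : w - Q w ∈ Nᗮ := Submodule.sub_starProjection_mem_orthogonal (K := N) w
    have h2 : ⟪u, w - Q w⟫_ℂ = 0 := (Submodule.mem_orthogonal N _).mp h1 u hu
    rw [inner_sub_right] at h2
    linear_combination h2
  -- expansion lemma
  have hexp : ∀ u, u ∈ N → ∀ v : H, ⟪u, v⟫_ℂ = 0 →
      ‖T (u + v)‖ ^ 2 = α ^ 2 * ‖u‖ ^ 2 - 2 * α * (⟪u, F v⟫_ℂ).re + ‖T v‖ ^ 2 := by
    intro u hu v huv
    have hFu : F u = 0 := hu.2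
    have hTu : T u = (α : ℂ) • u := by
      simp [hT, sub_apply, smul_apply, one_apply, hFu]
    have hsplit : T (u + v) = (α : ℂ) • u + T v := by rw [map_add, hTu]
    have hTv : T v = (α : ℂ) • v - F v := by simp [hT, sub_apply, smul_apply, one_apply]
    have hinner2 : ⟪(α : ℂ) • u, T v⟫_ℂ = -((α : ℂ) * ⟪u, F v⟫_ℂ) := by
      rw [hTv, inner_sub_right, inner_smul_left, inner_smul_right, inner_smul_left, huv,
        Complex.conj_ofReal]
      ring
    have hre : (⟪(α : ℂ) • u, T v⟫_ℂ).re = -(α * (⟪u, F v⟫_ℂ).re) := by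
      rw [hinner2]
      simp [Complex.mul_re]
    have hnsm : ‖(α : ℂ) • u‖ ^ 2 = α ^ 2 * ‖u‖ ^ 2 := by
      rw [norm_smul]
      simp [abs_of_nonneg hα]
      ring
    rw [hsplit, @norm_add_sq ℂ _ _ _ _ ((α : ℂ) • u) (T v)]
    rw [hnsm]
    simp only [RCLike.re_to_complex]
    rw [hre]
    ring
  -- the function to minimize on the compact ball of W
  set gW : W → ℝ := fun v =>
    α ^ 2 * (1 - ‖(v : H)‖ ^ 2) - 2 * α * Real.sqrt (1 - ‖(v : H)‖ ^ 2) * ‖Q (F (v : H))‖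
      + ‖T (v : H)‖ ^ 2 with hgWdef
  have hgWc : Continuous gW := by
    have hQc : Continuous fun v : W => Q (F (v : H)) :=
      continuous_subtype_val.comp ((Submodule.orthogonalProjectionOnto N).continuous.comp
        (F.continuous.comp continuous_subtype_val))
    have h1 : Continuous fun v : W => ‖(v : H)‖ := continuous_subtype_val.norm
    have h2 : Continuous fun v : W => ‖T (v : H)‖ :=
      (T.continuous.comp continuous_subtype_val).norm
    exact ((continuous_const.mul (continuous_const.sub (h1.pow 2))).sub
      ((continuous_const.mul ((continuous_const.sub (h1.pow 2)).sqrt)).mul hQc.norm)).add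
      (h2.pow 2)
  have hK : IsCompact (Metric.closedBall (0 : W) 1) := isCompact_closedBall _ _
  obtain ⟨v₀, hv₀K, hv₀min⟩ := hK.exists_isMinOn ⟨0, by simp⟩ hgWc.continuousOn
  have hv₀1 : ‖(v₀ : H)‖ ≤ 1 := by
    simpa [Metric.mem_closedBall, dist_zero_right] using hv₀K
  set r₀ : ℝ := Real.sqrt (1 - ‖(v₀ : H)‖ ^ 2) with hr₀def
  have hr₀ : 0 ≤ r₀ := Real.sqrt_nonneg _
  have hr₀sq : r₀ ^ 2 = 1 - ‖(v₀ : H)‖ ^ 2 := Real.sq_sqrt (by nlinarith [norm_nonneg (v₀ : H)])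
  -- construct u₀
  obtain ⟨u₀, hu₀N, hu₀n, hu₀i⟩ :
      ∃ u, u ∈ N ∧ ‖u‖ = r₀ ∧ (⟪u, F (v₀ : H)⟫_ℂ).re = r₀ * ‖Q (F (v₀ : H))‖ := by
    by_cases hq : Q (F (v₀ : H)) = 0
    · refine ⟨((r₀ : ℂ)) • e, N.smul_mem _ heN, ?_, ?_⟩
      · rw [norm_smul, he1]; simp [abs_of_nonneg hr₀]
      · rw [hinner _ (N.smul_mem _ heN), hq]
        simp
    · set q := Q (F (v₀ : H)) with hqdef
      have hqN : q ∈ N := hQmem _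
      have hqn : ‖q‖ ≠ 0 := norm_ne_zero_iff.mpr hq
      refine ⟨((r₀ * ‖q‖⁻¹ : ℝ) : ℂ) • q, N.smul_mem _ hqN, ?_, ?_⟩
      · rw [norm_smul, Complex.norm_real, Real.norm_eq_abs,
          abs_of_nonneg (mul_nonneg hr₀ (inv_nonneg.mpr (norm_nonneg q)))]
        field_simp
      · rw [hinner _ (N.smul_mem _ hqN), inner_smul_left, inner_self_eq_norm_sq_to_K,
          Complex.conj_ofReal]
        calc (((r₀ * ‖q‖⁻¹ : ℝ) : ℂ) * (‖q‖ : ℂ) ^ 2).re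
            = r₀ * ‖q‖⁻¹ * ‖q‖ ^ 2 := by norm_cast
          _ = r₀ * ‖q‖ := by field_simp
  have huv₀ : ⟪u₀, (v₀ : H)⟫_ℂ = 0 := (Submodule.mem_orthogonal N _).mp v₀.2.1 u₀ hu₀N
  set x₀ : H := u₀ + v₀ with hx₀def
  have hx₀M : x₀ ∈ M := add_mem (hNM hu₀N) (hWM v₀.2)
  have hx₀n : ‖x₀‖ = 1 := by
    have h1 : ‖x₀‖ ^ 2 = ‖u₀‖ ^ 2 + ‖(v₀ : H)‖ ^ 2 := by
      rw [hx₀def, @norm_add_sq ℂ _ _ _ _ u₀ (v₀ : H), huv₀]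
      simp
    rw [hu₀n, hr₀sq] at h1
    nlinarith [norm_nonneg x₀]
  have hTx₀sq : ‖T x₀‖ ^ 2 = gW v₀ := by
    rw [hx₀def, hexp u₀ hu₀N (v₀ : H) huv₀, hu₀n, hu₀i]
    simp only [hgWdef]
    rw [hr₀sq]
    ring
  refine minAttainsOn_of_min T M x₀ hx₀M hx₀n ?_
  intro y hyM hy1
  set u : H := (Submodule.orthogonalProjectionOnto N y : H) with hudef
  set v : H := y - u with hvdef
  have huN : u ∈ N := (Submodule.orthogonalProjectionOnto N y).2
  have hvO : v ∈ Nᗮ := Submodule.sub_starProjection_mem_orthogonal (K := N) y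
  have hvM : v ∈ M := sub_mem hyM (hNM huN)
  have hvW : v ∈ W := ⟨hvO, hvM⟩
  have huv : ⟪u, v⟫_ℂ = 0 := (Submodule.mem_orthogonal N v).mp hvO u huN
  have hsum : u + v = y := by rw [hvdef]; abel
  have hnorm : ‖u‖ ^ 2 + ‖v‖ ^ 2 = 1 := by
    have h1 : ‖u + v‖ ^ 2 = ‖u‖ ^ 2 + ‖v‖ ^ 2 := by
      rw [@norm_add_sq ℂ _ _ _ _ u v, huv]; simp
    rw [hsum, hy1] at h1
    linarith [h1.symm]
  have hv1 : ‖v‖ ≤ 1 := by nlinarith [norm_nonneg v, sq_nonneg ‖u‖]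
  have hun : ‖u‖ = Real.sqrt (1 - ‖v‖ ^ 2) := by
    rw [show (1 : ℝ) - ‖v‖ ^ 2 = ‖u‖ ^ 2 by linarith, Real.sqrt_sq (norm_nonneg u)]
  have hcs : (⟪u, F v⟫_ℂ).re ≤ ‖u‖ * ‖Q (F v)‖ := by
    rw [hinner u huN (F v)]
    calc (⟪u, Q (F v)⟫_ℂ).re ≤ ‖⟪u, Q (F v)⟫_ℂ‖ := Complex.re_le_norm _
      _ = ‖⟪u, Q (F v)⟫_ℂ‖ := rfl
      _ ≤ ‖u‖ * ‖Q (F v)‖ := norm_inner_le_norm _ _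
  have key : gW ⟨v, hvW⟩ ≤ ‖T y‖ ^ 2 := by
    rw [← hsum, hexp u huN v huv]
    simp only [hgWdef]
    rw [← hun]
    have h2 : α * (⟪u, F v⟫_ℂ).re ≤ α * (‖u‖ * ‖Q (F v)‖) :=
      mul_le_mul_of_nonneg_left hcs hα
    have h3 : (1 : ℝ) - ‖v‖ ^ 2 = ‖u‖ ^ 2 := by linarith
    rw [h3]
    nlinarith [h2]
  have hmem : (⟨v, hvW⟩ : W) ∈ Metric.closedBall (0 : W) 1 := by
    simp only [Metric.mem_closedBall, dist_zero_right]
    exact hv1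
  have hfin : ‖T x₀‖ ^ 2 ≤ ‖T y‖ ^ 2 := by
    rw [hTx₀sq]
    exact le_trans (isMinOn_iff.mp hv₀min _ hmem) key
  nlinarith [norm_nonneg (T x₀), norm_nonneg (T y), hfin]
end

section
/- Let K be a positive compact operator and F a finite rank operator on a complex Hilbert space H. Then for every α ≥ ‖K‖/2, the operator αI - K + F is absolutely minimum attaining. -/
open ContinuousLinearMap Filter Topology

local notation "⟪" x ", " y "⟫" => @inner ℂ _ _ x y

section Aux

variable {H : Type*} [NormedAddCommGroup H] [InnerProductSpace ℂ H]

lemma clusterPt_map_of_clusterPt {X Y : Type*} [TopologicalSpace X] [TopologicalSpace Y]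
    {g : X → Y} (hg : Continuous g) {x : X} {f : Filter X} (h : ClusterPt x f) :
    ClusterPt (g x) (f.map g) := by
  have h1 : Filter.map g (𝓝 x ⊓ f) ≤ 𝓝 (g x) ⊓ Filter.map g f :=
    le_inf ((Filter.map_mono inf_le_left).trans (hg.continuousAt (x := x)))
      (Filter.map_mono inf_le_right)
  haveI : (𝓝 x ⊓ f).NeBot := h
  exact Filter.neBot_of_le h1

lemma clusterPt_eq_of_tendsto {Y : Type*} [TopologicalSpace Y] [T2Space Y]
    {f : Filter Y} [f.NeBot] {a b : Y} (h : ClusterPt a f) (h' : f ≤ 𝓝 b) : a = b :=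
  t2_iff_nhds.mp ‹T2Space Y› (h.mono h')

/-- Weak cluster point of a sequence in the unit ball of a Hilbert space. -/
lemma exists_weak_cluster [CompleteSpace H] (u : ℕ → H) (hu : ∀ n, ‖u n‖ ≤ 1) :
    ∃ x : H, ‖x‖ ≤ 1 ∧ ∀ v : H,
      ClusterPt ⟪x, v⟫ (Filter.map (fun n => ⟪u n, v⟫) Filter.atTop) := by
  classical
  set td := InnerProductSpace.toDual ℂ H with htd
  set seq : ℕ → WeakDual ℂ H := fun n => StrongDual.toWeakDual (td (u n)) with hseq
  have hmem : ∀ n, seq n ∈ WeakDual.toStrongDual ⁻¹' Metric.closedBall 0 1 := by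
    intro n
    simp only [Set.mem_preimage, Metric.mem_closedBall, dist_zero_right]
    show ‖td (u n)‖ ≤ 1
    rw [td.norm_map]
    exact hu n
  have hcomp := WeakDual.isCompact_closedBall (𝕜 := ℂ) (E := H) 0 1
  obtain ⟨g, hgmem, hg⟩ := hcomp.exists_clusterPt (f := Filter.map seq Filter.atTop)
    (le_principal_iff.mpr (Filter.mem_map.mpr (Filter.Eventually.of_forall hmem)))
  refine ⟨td.symm (WeakDual.toStrongDual g), ?_, ?_⟩
  · rw [td.symm.norm_map]
    simpa [dist_zero_right] using hgmem
  · intro v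
    have heval : Continuous fun w : WeakDual ℂ H => w v := WeakDual.eval_continuous v
    have h1 : ClusterPt (g v) ((Filter.map seq Filter.atTop).map fun w : WeakDual ℂ H => w v) :=
      clusterPt_map_of_clusterPt heval hg
    rw [Filter.map_map] at h1
    have h2 : ((fun w : WeakDual ℂ H => w v) ∘ seq) = fun n => ⟪u n, v⟫ := by
      funext n
      show td (u n) v = ⟪u n, v⟫
      exact InnerProductSpace.toDual_apply_apply
    have h3 : ⟪td.symm (WeakDual.toStrongDual g), v⟫ = g v := by
      have := InnerProductSpace.toDual_apply_apply
        (𝕜 := ℂ) (x := td.symm (WeakDual.toStrongDual g)) (y := v)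
      rw [← this, htd]
      simp only [LinearIsometryEquiv.apply_symm_apply]
      rfl
    rw [h3, ← h2]
    exact h1

/-- A finite rank operator is compact. -/
lemma isCompactOperator_of_finiteRank (F : H →L[ℂ] H)
    (h : FiniteDimensional ℂ (LinearMap.range (F : H →ₗ[ℂ] H))) : IsCompactOperator ⇑F := by
  haveI := h
  haveI : ProperSpace (LinearMap.range (F : H →ₗ[ℂ] H)) := FiniteDimensional.proper ℂ _
  refine ⟨Subtype.val '' Metric.closedBall (0 : LinearMap.range (F : H →ₗ[ℂ] H)) ‖F‖, ?_, ?_⟩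
  · exact (isCompact_closedBall _ _).image continuous_subtype_val
  · refine Filter.mem_of_superset (Metric.ball_mem_nhds 0 one_pos) ?_
    intro x hx
    refine ⟨⟨F x, LinearMap.mem_range_self _ x⟩, ?_, rfl⟩
    simp only [Metric.mem_closedBall, dist_zero_right]
    calc ‖(⟨F x, _⟩ : LinearMap.range (F : H →ₗ[ℂ] H))‖ = ‖F x‖ := rfl
      _ ≤ ‖F‖ * ‖x‖ := F.le_opNorm x
      _ ≤ ‖F‖ * 1 := by
          have := (Metric.mem_ball.mp hx)
          rw [dist_zero_right] at this
          exact mul_le_mul_of_nonneg_left this.le (norm_nonneg F)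
      _ = ‖F‖ := mul_one _

/-- Cauchy-Schwarz for a positive operator. -/
lemma sq_norm_apply_le_of_isPositive [CompleteSpace H] {K : H →L[ℂ] H} (hK : K.IsPositive)
    (y : H) : ‖K y‖ ^ 2 ≤ ‖K‖ * (⟪y, K y⟫).re := by
  have hsymm : ∀ a b : H, ⟪K a, b⟫ = ⟪a, K b⟫ := fun a b => hK.1 a b
  have hre : ∀ a b : H, (⟪K b, a⟫).re = (⟪K a, b⟫).re := by
    intro a b
    rw [hsymm b a, ← inner_conj_symm]
    exact Complex.conj_re _
  -- Cauchy–Schwarz for the positive form (a, b) ↦ re ⟪K a, b⟫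
  have hCS : ∀ a b : H, (⟪K a, b⟫).re ^ 2 ≤ (⟪K a, a⟫).re * (⟪K b, b⟫).re := by
    intro a b
    have hq : ∀ t : ℝ, 0 ≤ (⟪K b, b⟫).re * (t * t) + (2 * (⟪K a, b⟫).re) * t
        + (⟪K a, a⟫).re := by
      intro t
      have h0 : 0 ≤ (⟪K (a + (t : ℂ) • b), a + (t : ℂ) • b⟫).re := hK.2 (a + (t : ℂ) • b)
      have hexp : ⟪K (a + (t : ℂ) • b), a + (t : ℂ) • b⟫
          = ⟪K a, a⟫ + (t : ℂ) * ⟪K a, b⟫ + (t : ℂ) * ⟪K b, a⟫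
            + (t : ℂ) * (t : ℂ) * ⟪K b, b⟫ := by
        rw [map_add, map_smul, inner_add_left, inner_add_right, inner_add_right,
          inner_smul_left, inner_smul_right, inner_smul_left, inner_smul_right]
        rw [Complex.conj_ofReal]
        ring
      rw [hexp] at h0
      simp only [Complex.add_re, Complex.mul_re, Complex.ofReal_re, Complex.ofReal_im,
        Complex.mul_im, zero_mul, mul_zero, sub_zero, zero_add] at h0 ⊢
      rw [hre a b] at h0
      ring_nf at h0 ⊢
      linarith [h0]
    have := discrim_le_zero hq
    rw [discrim] at this
    nlinarith [this]
  have h1 := hCS y (K y)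
  have h2 : (⟪K (K y), K y⟫).re ≤ ‖K‖ * ‖K y‖ ^ 2 := by
    calc (⟪K (K y), K y⟫).re ≤ ‖K (K y)‖ * ‖K y‖ := by
          have := re_inner_le_norm (𝕜 := ℂ) (K (K y)) (K y)
          simpa using this
      _ ≤ (‖K‖ * ‖K y‖) * ‖K y‖ :=
          mul_le_mul_of_nonneg_right (K.le_opNorm (K y)) (norm_nonneg _)
      _ = ‖K‖ * ‖K y‖ ^ 2 := by ring
  have h3 : (⟪K y, K y⟫).re = ‖K y‖ ^ 2 := by
    have := inner_self_eq_norm_sq (𝕜 := ℂ) (K y)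
    simpa using this
  have h4 : (⟪K y, y⟫).re = (⟪y, K y⟫).re := by
    rw [← inner_conj_symm]; exact Complex.conj_re _
  rcases eq_or_ne (K y) 0 with h0 | h0
  · have h6 : 0 ≤ (⟪y, K y⟫).re := by rw [← h4]; exact hK.2 y
    rw [h0]
    simp only [norm_zero]
    simpa using mul_nonneg (norm_nonneg K) h6
  · have hKy2 : 0 < ‖K y‖ ^ 2 := pow_pos (norm_pos_iff.mpr h0) 2
    rw [h3, h4] at h1
    -- h1 : (‖K y‖^2)^2 ≤ (⟪y, K y⟫).re * (⟪K (K y), K y⟫).re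
    have h5 : (⟪y, K y⟫).re * (⟪K (K y), K y⟫).re ≤ (⟪y, K y⟫).re * (‖K‖ * ‖K y‖ ^ 2) := by
      apply mul_le_mul_of_nonneg_left h2
      rw [← h4]; exact hK.2 y
    nlinarith [h1, h5, hKy2]

end Aux

theorem stmt15 {H : Type*} [NormedAddCommGroup H] [InnerProductSpace ℂ H]
    [CompleteSpace H] (K F : H →L[ℂ] H) (hK : K.IsPositive)
    (hKc : IsCompactOperator (K : H → H))
    (hFr : FiniteDimensional ℂ (LinearMap.range (F : H →ₗ[ℂ] H))) :
    ∀ α : ℝ, ‖K‖ / 2 ≤ α → AbsMinAttains ((α : ℂ) • (1 : H →L[ℂ] H) - K + F) := by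
  intro α hα M hM hMc
  have hα0 : 0 ≤ α := le_trans (div_nonneg (norm_nonneg K) (by norm_num)) hα
  set C : H →L[ℂ] H := K - F with hC
  set T : H →L[ℂ] H := (α : ℂ) • (1 : H →L[ℂ] H) - K + F with hT
  have hTapp : ∀ z : H, T z = (α : ℂ) • z - C z := by
    intro z
    simp only [hT, hC, ContinuousLinearMap.add_apply, ContinuousLinearMap.sub_apply,
      ContinuousLinearMap.smul_apply, ContinuousLinearMap.one_apply]
    abel
  set S : Set ℝ := (fun x => ‖T x‖) '' {x : H | x ∈ M ∧ ‖x‖ = 1} with hS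
  have hmmod : mmodOn T M = sInf S := rfl
  obtain ⟨x₀', hx₀M', hx₀ne⟩ := Submodule.exists_mem_ne_zero_of_ne_bot hM
  set x₀ : H := (‖x₀'‖⁻¹ : ℂ) • x₀' with hx₀
  have hx₀M : x₀ ∈ M := M.smul_mem _ hx₀M'
  have hx₀n : ‖x₀‖ = 1 := norm_smul_inv_norm hx₀ne
  have hSne : S.Nonempty := ⟨‖T x₀‖, ⟨x₀, ⟨hx₀M, hx₀n⟩, rfl⟩⟩
  have hSbdd : BddBelow S := ⟨0, by rintro z ⟨x, hx, rfl⟩; exact norm_nonneg _⟩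
  have hm0 : 0 ≤ sInf S := le_csInf hSne (by rintro z ⟨x, hx, rfl⟩; exact norm_nonneg _)
  have hmle : ∀ y, y ∈ M → ‖y‖ = 1 → sInf S ≤ ‖T y‖ := fun y hy h1 =>
    csInf_le hSbdd ⟨y, ⟨hy, h1⟩, rfl⟩
  by_cases hfd : FiniteDimensional ℂ M
  · -- finite dimensional case: compactness of the sphere
    haveI := hfd
    haveI : ProperSpace M := FiniteDimensional.proper ℂ M
    have hsph : IsCompact (Metric.sphere (0 : M) 1) := isCompact_sphere 0 1
    have hne : (Metric.sphere (0 : M) 1).Nonempty :=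
      ⟨⟨x₀, hx₀M⟩, by rw [mem_sphere_zero_iff_norm]; exact hx₀n⟩
    have hcont : Continuous fun y : M => ‖T y‖ :=
      (T.continuous.comp continuous_subtype_val).norm
    obtain ⟨y₀, hy₀mem, hy₀min⟩ := hsph.exists_isMinOn hne hcont.continuousOn
    have hy₀n : ‖(y₀ : H)‖ = 1 := mem_sphere_zero_iff_norm.mp hy₀mem
    refine ⟨y₀, y₀.2, hy₀n, ?_⟩
    rw [hmmod]
    refine le_antisymm ?_ (hmle _ y₀.2 hy₀n)
    refine le_csInf hSne ?_
    rintro z ⟨x, ⟨hxM, hxn⟩, rfl⟩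
    exact isMinOn_iff.mp hy₀min ⟨x, hxM⟩ (mem_sphere_zero_iff_norm.mpr hxn)
  · -- infinite dimensional case
    obtain ⟨useq, _, huseq, humem⟩ := exists_seq_tendsto_sInf hSne hSbdd
    have hex : ∀ n, ∃ x : H, (x ∈ M ∧ ‖x‖ = 1) ∧ ‖T x‖ = useq n := fun n => humem n
    choose xs hxsP hxsval using hex
    have hxsM : ∀ n, xs n ∈ M := fun n => (hxsP n).1
    have hxsn : ∀ n, ‖xs n‖ = 1 := fun n => (hxsP n).2
    have hTxs : Tendsto (fun n => ‖T (xs n)‖) atTop (𝓝 (sInf S)) := by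
      have : (fun n => ‖T (xs n)‖) = useq := funext hxsval
      rw [this]; exact huseq
    have hFc := isCompactOperator_of_finiteRank F hFr
    have hCc : IsCompactOperator ⇑C := by
      have h := hKc.sub hFc
      have heq : ⇑(K - F) = ⇑K - ⇑F := rfl
      rw [hC, heq]; exact h
    obtain ⟨Kset, hKsetc, hKset⟩ := hCc
    obtain ⟨ε, hε, hball⟩ := Metric.mem_nhds_iff.mp hKset
    set Kset2 : Set H := (fun z => ((2 / ε : ℝ) : ℂ) • z) '' Kset with hKset2
    have hKset2c : IsCompact Kset2 := hKsetc.image (continuous_const_smul _)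
    have hmem2 : ∀ n, C (xs n) ∈ Kset2 := by
      intro n
      have h1 : ((ε / 2 : ℝ) : ℂ) • xs n ∈ Metric.ball (0 : H) ε := by
        rw [Metric.mem_ball, dist_zero_right, norm_smul, Complex.norm_real,
          Real.norm_eq_abs, abs_of_pos (half_pos hε), hxsn n, mul_one]
        exact half_lt_self hε
      have h2 : C (((ε / 2 : ℝ) : ℂ) • xs n) ∈ Kset := hball h1
      refine ⟨C (((ε / 2 : ℝ) : ℂ) • xs n), h2, ?_⟩
      show ((2 / ε : ℝ) : ℂ) • C (((ε / 2 : ℝ) : ℂ) • xs n) = C (xs n)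
      rw [map_smul, smul_smul, ← Complex.ofReal_mul]
      have hone : (2 / ε) * (ε / 2) = 1 := by field_simp
      rw [hone, Complex.ofReal_one, one_smul]
    obtain ⟨w, hwmem, φ₁, hφ₁, hCconv⟩ := hKset2c.tendsto_subseq hmem2
    have hbdd : ∀ n, ⟪xs (φ₁ n), w⟫ ∈ Metric.closedBall (0 : ℂ) ‖w‖ := by
      intro n
      rw [Metric.mem_closedBall, dist_zero_right]
      calc ‖⟪xs (φ₁ n), w⟫‖ ≤ ‖xs (φ₁ n)‖ * ‖w‖ := norm_inner_le_norm _ _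
        _ = ‖w‖ := by rw [hxsn, one_mul]
    obtain ⟨c, -, φ₂, hφ₂, hcconv⟩ :=
      tendsto_subseq_of_bounded Metric.isBounded_closedBall hbdd
    set ψ : ℕ → ℕ := φ₁ ∘ φ₂ with hψ
    set ys : ℕ → H := fun n => xs (ψ n) with hys
    have hysM : ∀ n, ys n ∈ M := fun n => hxsM _
    have hysn : ∀ n, ‖ys n‖ = 1 := fun n => hxsn _
    have hCys : Tendsto (fun n => C (ys n)) atTop (𝓝 w) := hCconv.comp hφ₂.tendsto_atTop
    have hcys : Tendsto (fun n => ⟪ys n, w⟫) atTop (𝓝 c) := hcconv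
    have hTys : Tendsto (fun n => ‖T (ys n)‖) atTop (𝓝 (sInf S)) :=
      hTxs.comp (hφ₁.comp hφ₂).tendsto_atTop
    obtain ⟨x, hxnorm, hclus⟩ := exists_weak_cluster ys (fun n => (hysn n).le)
    haveI : CompleteSpace M := hMc.completeSpace_coe
    have hxM : x ∈ M := by
      rw [← Submodule.orthogonal_orthogonal M, Submodule.mem_orthogonal]
      intro v hv
      have h0 : Tendsto (fun n => ⟪ys n, v⟫) atTop (𝓝 0) := by
        have hz : ∀ n, ⟪ys n, v⟫ = (0 : ℂ) := fun n =>
          (Submodule.mem_orthogonal M v).mp hv (ys n) (hysM n)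
        simpa [funext hz] using (tendsto_const_nhds : Tendsto (fun _ : ℕ => (0:ℂ)) atTop _)
      have h1 := clusterPt_eq_of_tendsto (hclus v) h0
      rw [← inner_conj_symm, h1, map_zero]
    have hCx : C x = w := by
      apply ext_inner_right ℂ
      intro v
      have h1 : Tendsto (fun n => ⟪ys n, (ContinuousLinearMap.adjoint C) v⟫) atTop
          (𝓝 ⟪w, v⟫) := by
        have heq : (fun n => ⟪ys n, (ContinuousLinearMap.adjoint C) v⟫)
            = fun n => ⟪C (ys n), v⟫ :=
          funext fun n => ContinuousLinearMap.adjoint_inner_right C (ys n) v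
        rw [heq]
        exact hCys.inner tendsto_const_nhds
      have h2 := clusterPt_eq_of_tendsto (hclus _) h1
      rw [ContinuousLinearMap.adjoint_inner_right] at h2
      exact h2
    have hxw : ⟪x, w⟫ = c := clusterPt_eq_of_tendsto (hclus w) hcys
    have expand : ∀ z : H, ‖T z‖ ^ 2 = α ^ 2 * ‖z‖ ^ 2 - 2 * α * (⟪z, C z⟫).re + ‖C z‖ ^ 2 := by
      intro z
      have h1 : ‖T z‖ ^ 2 = ‖(α : ℂ) • z‖ ^ 2 - 2 * RCLike.re ⟪(α : ℂ) • z, C z⟫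
          + ‖C z‖ ^ 2 := by
        rw [hTapp z]; exact norm_sub_sq (𝕜 := ℂ) ((α : ℂ) • z) (C z)
      have h2 : ‖(α : ℂ) • z‖ ^ 2 = α ^ 2 * ‖z‖ ^ 2 := by
        rw [norm_smul, Complex.norm_real, Real.norm_eq_abs, mul_pow, sq_abs]
      have h3 : RCLike.re ⟪(α : ℂ) • z, C z⟫ = α * (⟪z, C z⟫).re := by
        rw [inner_smul_left, Complex.conj_ofReal]
        simp [Complex.mul_re]
      rw [h1, h2, h3]; ring
    have hinner : Tendsto (fun n => ⟪ys n, C (ys n)⟫) atTop (𝓝 c) := by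
      have h1 : Tendsto (fun n => ⟪ys n, C (ys n) - w⟫) atTop (𝓝 0) := by
        apply squeeze_zero_norm (a := fun n => ‖C (ys n) - w‖)
        · intro n
          calc ‖⟪ys n, C (ys n) - w⟫‖ ≤ ‖ys n‖ * ‖C (ys n) - w‖ := norm_inner_le_norm _ _
            _ = ‖C (ys n) - w‖ := by rw [hysn n, one_mul]
        · have := (hCys.sub (tendsto_const_nhds (x := w))).norm
          simpa using this
      have h2 := h1.add hcys
      rw [zero_add] at h2
      have heq : (fun n => ⟪ys n, C (ys n) - w⟫ + ⟪ys n, w⟫)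
          = fun n => ⟪ys n, C (ys n)⟫ := by
        funext n; rw [inner_sub_right]; ring
      rwa [heq] at h2
    have hre : Tendsto (fun n => (⟪ys n, C (ys n)⟫).re) atTop (𝓝 c.re) :=
      (Complex.continuous_re.tendsto c).comp hinner
    have hCnorm : Tendsto (fun n => ‖C (ys n)‖ ^ 2) atTop (𝓝 (‖w‖ ^ 2)) := hCys.norm.pow 2
    have hMain : (sInf S) ^ 2 = α ^ 2 - 2 * α * c.re + ‖w‖ ^ 2 := by
      have hL : Tendsto (fun n => ‖T (ys n)‖ ^ 2) atTop (𝓝 ((sInf S) ^ 2)) := hTys.pow 2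
      have hR : Tendsto (fun n => ‖T (ys n)‖ ^ 2) atTop
          (𝓝 (α ^ 2 * 1 - 2 * α * c.re + ‖w‖ ^ 2)) := by
        have heq : (fun n => ‖T (ys n)‖ ^ 2)
            = fun n => α ^ 2 * 1 - 2 * α * (⟪ys n, C (ys n)⟫).re + ‖C (ys n)‖ ^ 2 := by
          funext n; rw [expand (ys n), hysn n]; ring
        rw [heq]
        exact (tendsto_const_nhds.sub (hre.const_mul (2 * α))).add hCnorm
      have := tendsto_nhds_unique hL hR
      linarith [this]
    have hTx2 : ‖T x‖ ^ 2 = α ^ 2 * ‖x‖ ^ 2 - 2 * α * c.re + ‖w‖ ^ 2 := by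
      rw [expand x, hCx, hxw]
    by_cases hx1 : ‖x‖ = 1
    · refine ⟨x, hxM, hx1, ?_⟩
      rw [hmmod]
      have h2 : ‖T x‖ ^ 2 = (sInf S) ^ 2 := by rw [hTx2, hx1, hMain]; ring
      rw [← Real.sqrt_sq (norm_nonneg (T x)), h2, Real.sqrt_sq hm0]
    · have hαm : α ≤ sInf S := by
        by_cases hx0 : x = 0
        · have hw0 : w = 0 := by rw [← hCx, hx0, map_zero]
          have hc0 : c = 0 := by rw [← hxw, hx0, inner_zero_left]
          have h2 : (sInf S) ^ 2 = α ^ 2 := by rw [hMain, hw0, hc0]; simp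
          rw [← Real.sqrt_sq hα0, ← h2, Real.sqrt_sq hm0]
        · have ht : 0 < ‖x‖ := norm_pos_iff.mpr hx0
          have htlt : ‖x‖ < 1 := lt_of_le_of_ne hxnorm hx1
          have hu1 : sInf S ≤ ‖x‖⁻¹ * ‖T x‖ := by
            have h1 := hmle ((‖x‖⁻¹ : ℂ) • x) (M.smul_mem _ hxM) (norm_smul_inv_norm hx0)
            rwa [map_smul, norm_smul, norm_inv, Complex.norm_real, Real.norm_eq_abs,
              abs_of_pos ht] at h1
          have h2 : sInf S * ‖x‖ ≤ ‖T x‖ := by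
            have h3 := mul_le_mul_of_nonneg_left hu1 ht.le
            rw [← mul_assoc, mul_inv_cancel₀ ht.ne', one_mul] at h3
            linarith [h3]
          have hsq : (sInf S * ‖x‖) ^ 2 ≤ ‖T x‖ ^ 2 :=
            pow_le_pow_left₀ (mul_nonneg hm0 ht.le) h2 2
          have he : ‖T x‖ ^ 2 = (sInf S) ^ 2 - α ^ 2 + α ^ 2 * ‖x‖ ^ 2 := by
            rw [hTx2]; linarith [hMain]
          have ht2 : ‖x‖ ^ 2 < 1 := by nlinarith [htlt, ht]
          have h3 : α ^ 2 ≤ (sInf S) ^ 2 := by nlinarith [hsq, he, ht2]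
          rw [← Real.sqrt_sq hα0, ← Real.sqrt_sq hm0]
          exact Real.sqrt_le_sqrt h3
      obtain ⟨y0, hy0M, hy0F, hy0ne⟩ : ∃ y, y ∈ M ∧ F y = 0 ∧ y ≠ 0 := by
        by_contra hcon
        push_neg at hcon
        apply hfd
        haveI := hFr
        let g : M →ₗ[ℂ] LinearMap.range (F : H →ₗ[ℂ] H) :=
          LinearMap.codRestrict (LinearMap.range (F : H →ₗ[ℂ] H)) ((F : H →ₗ[ℂ] H).comp M.subtype)
            (fun z => LinearMap.mem_range_self _ _)
        have hginj : Function.Injective g := by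
          intro a b hab
          have h1 : F (a : H) = F (b : H) := congrArg Subtype.val hab
          have h2 : F ((a : H) - b) = 0 := by rw [map_sub, h1, sub_self]
          have h3 : ((a : H) - (b : H)) ∈ M := M.sub_mem a.2 b.2
          have h4 := hcon _ h3 h2
          exact Subtype.ext (sub_eq_zero.mp h4)
        exact FiniteDimensional.of_injective g hginj
      set y : H := (‖y0‖⁻¹ : ℂ) • y0 with hy
      have hyM : y ∈ M := M.smul_mem _ hy0M
      have hyn : ‖y‖ = 1 := norm_smul_inv_norm hy0ne
      have hyF : F y = 0 := by rw [hy, map_smul, hy0F, smul_zero]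
      have hCy : C y = K y := by rw [hC]; simp [hyF]
      set r : ℝ := (⟪y, K y⟫).re with hr
      clear_value r
      have hswap : (⟪K y, y⟫).re = r := by
        rw [hr, ← inner_conj_symm y (K y)]
        exact Complex.conj_re _
      have hr0 : 0 ≤ r := by
        have h5 := hK.2 y
        rw [ContinuousLinearMap.reApplyInnerSelf_apply] at h5
        rw [← hswap]
        exact h5
      have hcs := sq_norm_apply_le_of_isPositive hK y
      rw [← hr] at hcs
      have hTyy : ‖T y‖ ^ 2 = α ^ 2 - 2 * α * r + ‖K y‖ ^ 2 := by
        rw [expand y, hCy, hyn, ← hr]; ring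
      have h1 : sInf S ≤ ‖T y‖ := hmle y hyM hyn
      have h2 : α ^ 2 ≤ ‖T y‖ ^ 2 := pow_le_pow_left₀ hα0 (hαm.trans h1) 2
      have hK2α : ‖K‖ ≤ 2 * α := by linarith [hα]
      have hKyr : ‖K y‖ ^ 2 = 2 * α * r := by
        have hup : ‖K y‖ ^ 2 ≤ 2 * α * r := by
          refine hcs.trans ?_
          have := mul_le_mul_of_nonneg_right hK2α hr0
          linarith
        have hlow : 2 * α * r ≤ ‖K y‖ ^ 2 := by linarith [h2, hTyy]
        linarith
      have hTyval : ‖T y‖ ^ 2 = α ^ 2 := by rw [hTyy, hKyr]; ring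
      have hTyα : ‖T y‖ = α := by
        rw [← Real.sqrt_sq (norm_nonneg _), hTyval, Real.sqrt_sq hα0]
      refine ⟨y, hyM, hyn, ?_⟩
      rw [hmmod, hTyα]
      exact le_antisymm hαm (hTyα ▸ h1)
end

section
/- If T is an absolutely minimum attaining bounded operator on a complex Hilbert space H, then either the kernel N(T) or the range R(T) is finite dimensional. -/
open ContinuousLinearMap Filter Topology
open ComplexInnerProductSpace

lemma exists_orthonormal_seq {H : Type*} [NormedAddCommGroup H] [InnerProductSpace ℂ H]
    [CompleteSpace H] (K : Submodule ℂ H) (hc : IsClosed (K : Set H))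
    (hK : ¬ FiniteDimensional ℂ K) :
    ∃ v : ℕ → H, Orthonormal ℂ v ∧ ∀ n, v n ∈ K := by
  haveI : CompleteSpace K := hc.completeSpace_coe
  obtain ⟨w, b, hb⟩ := exists_hilbertBasis ℂ K
  have hw : w.Infinite := by
    by_contra hfin
    rw [Set.not_infinite] at hfin
    apply hK
    haveI : FiniteDimensional ℂ (Submodule.span ℂ w) :=
      FiniteDimensional.span_of_finite ℂ hfin
    have hclosed := (Submodule.span ℂ w).closed_of_finiteDimensional
    have htop : (Submodule.span ℂ w : Submodule ℂ K) = ⊤ := by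
      rw [← hclosed.submodule_topologicalClosure_eq]
      have := b.dense_span
      rwa [hb, Subtype.range_coe] at this
    haveI : FiniteDimensional ℂ (⊤ : Submodule ℂ K) := htop ▸ inferInstance
    exact (Submodule.topEquiv (R := ℂ) (M := K)).finiteDimensional
  let emb := hw.natEmbedding
  refine ⟨fun n => ((b (emb n) : K) : H), ?_, fun n => (b (emb n) : K).2⟩
  exact (b.orthonormal.comp emb emb.injective).comp_linearIsometry K.subtypeₗᵢ

theorem stmt18 {H : Type*} [NormedAddCommGroup H] [InnerProductSpace ℂ H]
    [CompleteSpace H] (T : H →L[ℂ] H) (hAM : AbsMinAttains T) :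
    FiniteDimensional ℂ (LinearMap.ker (T : H →ₗ[ℂ] H)) ∨ FiniteDimensional ℂ (LinearMap.range (T : H →ₗ[ℂ] H)) := by
  by_cases hker : FiniteDimensional ℂ (LinearMap.ker (T : H →ₗ[ℂ] H))
  · exact Or.inl hker
  refine Or.inr ?_
  by_contra hran
  set K : Submodule ℂ H := LinearMap.ker (T : H →ₗ[ℂ] H) with hKdef
  have hKc : IsClosed (K : Set H) := isClosed_ker T
  haveI : CompleteSpace K := hKc.completeSpace_coe
  -- the orthogonal complement of the kernel is infinite dimensional
  have hKo : ¬ FiniteDimensional ℂ (Kᗮ) := by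
    intro h
    apply hran
    have hle : LinearMap.range (T : H →ₗ[ℂ] H) ≤ Submodule.map (T : H →ₗ[ℂ] H) Kᗮ := by
      rintro _ ⟨x, rfl⟩
      obtain ⟨y, hy, z, hz, rfl⟩ := K.exists_add_mem_mem_orthogonal x
      refine ⟨z, hz, ?_⟩
      have hy0 : T y = 0 := hy
      simp [map_add, hy0]
    exact Submodule.finiteDimensional_of_le hle
  obtain ⟨e, he, heK⟩ := exists_orthonormal_seq K hKc hker
  obtain ⟨f, hf, hfK⟩ := exists_orthonormal_seq Kᗮ K.isClosed_orthogonal hKo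
  -- coefficients
  set β : ℕ → ℝ := fun n => min (1/2) (1/((n+1)*(1+‖T (f n)‖))) with hβdef
  have hβpos : ∀ n, 0 < β n := by
    intro n
    refine lt_min (by norm_num) ?_
    positivity
  have hβle : ∀ n, β n ≤ 1/2 := fun n => min_le_left _ _
  have hβsq : ∀ n, (β n)^2 ≤ 1 := by
    intro n
    have h1 : β n ≤ 1 := (hβle n).trans (by norm_num)
    nlinarith [hβpos n]
  set α : ℕ → ℝ := fun n => Real.sqrt (1 - (β n)^2) with hαdef
  have hαnn : ∀ n, 0 ≤ α n := fun n => Real.sqrt_nonneg _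
  have hαsq : ∀ n, (α n)^2 = 1 - (β n)^2 := by
    intro n
    exact Real.sq_sqrt (by linarith [hβsq n])
  set g : ℕ → H := fun n => (α n : ℂ) • e n + (β n : ℂ) • f n with hgdef
  -- inner products between e and f vanish
  have hef : ∀ n m, ⟪e n, f m⟫ = 0 := by
    intro n m
    exact (Submodule.mem_orthogonal K (f m)).mp (hfK m) (e n) (heK n)
  have hfe : ∀ n m, (inner ℂ (f n) (e m) : ℂ) = 0 := fun n m => by
    rw [← inner_conj_symm, hef m n, map_zero]
  have hgnorm : ∀ n, ‖g n‖ = 1 := by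
    intro n
    have hinner : ⟪(α n : ℂ) • e n, (β n : ℂ) • f n⟫ = 0 := by
      rw [inner_smul_left, inner_smul_right, hef n n]
      ring
    have hsq : ‖g n‖^2 = 1 := by
      show ‖(α n : ℂ) • e n + (β n : ℂ) • f n‖^2 = 1
      rw [sq, norm_add_sq_eq_norm_sq_add_norm_sq_of_inner_eq_zero _ _ hinner]
      rw [norm_smul, norm_smul]
      simp only [Complex.norm_real, Real.norm_eq_abs, abs_of_nonneg (hαnn n),
        abs_of_nonneg (hβpos n).le, he.1 n, hf.1 n]
      have := hαsq n
      nlinarith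
    nlinarith [norm_nonneg (g n), hsq]
  have hTg : ∀ n, ‖T (g n)‖ = β n * ‖T (f n)‖ := by
    intro n
    have he0 : T (e n) = 0 := heK n
    show ‖T ((α n : ℂ) • e n + (β n : ℂ) • f n)‖ = _
    simp only [map_add, map_smul, he0, smul_zero, zero_add]
    rw [norm_smul]
    simp [abs_of_nonneg (hβpos n).le]
  have hTgsmall : ∀ n, ‖T (g n)‖ ≤ 1/(n+1) := by
    intro n
    rw [hTg n]
    have h1 : β n ≤ 1/((n+1)*(1+‖T (f n)‖)) := min_le_right _ _
    have h2 : (0:ℝ) < (n+1) := by positivity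
    have h3 : (0:ℝ) ≤ ‖T (f n)‖ := norm_nonneg _
    have h4 : β n * ‖T (f n)‖ ≤ ‖T (f n)‖/((n+1)*(1+‖T (f n)‖)) := by
      rw [div_eq_mul_inv]
      have := mul_le_mul_of_nonneg_right h1 h3
      rw [div_eq_mul_inv, one_mul] at this
      linarith [this]
    refine h4.trans ?_
    rw [div_le_div_iff₀ (by positivity) h2]
    nlinarith
  set M : Submodule ℂ H := (Submodule.span ℂ (Set.range g)).topologicalClosure with hMdef
  have hgM : ∀ n, g n ∈ M :=
    fun n => Submodule.le_topologicalClosure _ (Submodule.subset_span ⟨n, rfl⟩)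
  have hMne : M ≠ ⊥ := by
    intro h
    have hg0 : g 0 = 0 := by
      have := hgM 0
      rw [h] at this
      simpa using this
    have h0 := hgnorm 0
    rw [hg0, norm_zero] at h0
    norm_num at h0
  obtain ⟨x, hxM, hx1, hxT⟩ := hAM M hMne (Submodule.isClosed_topologicalClosure _)
  -- the min value is 0
  have hm0 : mmodOn T M = 0 := by
    have hne : ((fun x => ‖T x‖) '' {x : H | x ∈ M ∧ ‖x‖ = 1}).Nonempty :=
      ⟨‖T (g 0)‖, g 0, ⟨hgM 0, hgnorm 0⟩, rfl⟩
    have hbdd : BddBelow ((fun x => ‖T x‖) '' {x : H | x ∈ M ∧ ‖x‖ = 1}) := by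
      refine ⟨0, ?_⟩
      rintro _ ⟨y, _, rfl⟩
      exact norm_nonneg _
    have hle' : ∀ n : ℕ, mmodOn T M ≤ 1/(n+1) := by
      intro n
      refine (csInf_le hbdd ⟨g n, ⟨hgM n, hgnorm n⟩, rfl⟩).trans (hTgsmall n)
    have h0le : 0 ≤ mmodOn T M := le_csInf hne (by rintro _ ⟨y, _, rfl⟩; exact norm_nonneg _)
    have hle0 : mmodOn T M ≤ 0 :=
      ge_of_tendsto' tendsto_one_div_add_atTop_nhds_zero_nat hle'
    linarith
  rw [hm0] at hxT
  have hTx : T x = 0 := norm_eq_zero.mp hxT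
  have hxK : x ∈ K := hTx
  -- x is orthogonal to all f n
  have hxf : ∀ n, ⟪x, f n⟫ = 0 := fun n =>
    (Submodule.mem_orthogonal K (f n)).mp (hfK n) x hxK
  -- x is orthogonal to all e n
  have hxe : ∀ n, ⟪x, e n⟫ = 0 := by
    intro n
    set φ : H →L[ℂ] ℂ := (β n : ℂ) • innerSL ℂ (e n) - (α n : ℂ) • innerSL ℂ (f n) with hφdef
    have hker : M ≤ LinearMap.ker (φ : H →ₗ[ℂ] ℂ) := by
      refine Submodule.topologicalClosure_minimal _ ?_ (isClosed_ker φ)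
      rw [Submodule.span_le]
      rintro _ ⟨m, rfl⟩
      simp only [SetLike.mem_coe, LinearMap.mem_ker]
      rw [hφdef]
      simp only [ContinuousLinearMap.coe_coe, ContinuousLinearMap.sub_apply, ContinuousLinearMap.smul_apply, innerSL_apply_apply,
        smul_eq_mul]
      have h1 : (inner ℂ (e n) (g m) : ℂ) = (α m : ℂ) * inner ℂ (e n) (e m) := by
        show (inner ℂ (e n) ((α m : ℂ) • e m + (β m : ℂ) • f m) : ℂ) = _
        rw [inner_add_right, inner_smul_right, inner_smul_right, hef n m, mul_zero, add_zero]
      have h2 : (inner ℂ (f n) (g m) : ℂ) = (β m : ℂ) * inner ℂ (f n) (f m) := by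
        show (inner ℂ (f n) ((α m : ℂ) • e m + (β m : ℂ) • f m) : ℂ) = _
        rw [inner_add_right, inner_smul_right, inner_smul_right, hfe n m, mul_zero, zero_add]
      rw [h1, h2, orthonormal_iff_ite.mp he n m, orthonormal_iff_ite.mp hf n m]
      by_cases hnm : n = m
      · subst hnm; simp; ring
      · simp [hnm]
    have hφx : φ x = 0 := hker hxM
    rw [hφdef] at hφx
    simp only [ContinuousLinearMap.sub_apply, ContinuousLinearMap.smul_apply, innerSL_apply_apply,
      smul_eq_mul] at hφx
    have hfx : ⟪f n, x⟫ = 0 := by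
      rw [← inner_conj_symm, hxf n, map_zero]
    rw [hfx, mul_zero, sub_eq_zero] at hφx
    have hβne : (β n : ℂ) ≠ 0 := by
      simp only [ne_eq, Complex.ofReal_eq_zero]
      exact (hβpos n).ne'
    have h0 : (β n : ℂ) * ⟪e n, x⟫ = 0 := hφx
    have : ⟪e n, x⟫ = 0 := (mul_eq_zero.mp h0).resolve_left hβne
    rw [← inner_conj_symm, this, map_zero]
  -- conclude x = 0
  have hxg : ∀ m, ⟪x, g m⟫ = 0 := by
    intro m
    show ⟪x, (α m : ℂ) • e m + (β m : ℂ) • f m⟫ = 0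
    rw [inner_add_right, inner_smul_right, inner_smul_right, hxe m, hxf m]
    ring
  have hx0 : x = 0 := by
    have hker : M ≤ LinearMap.ker ((innerSL ℂ x : H →L[ℂ] ℂ) : H →ₗ[ℂ] ℂ) := by
      refine Submodule.topologicalClosure_minimal _ ?_ (isClosed_ker _)
      rw [Submodule.span_le]
      rintro _ ⟨m, rfl⟩
      simpa using hxg m
    have := hker hxM
    simp only [LinearMap.mem_ker, ContinuousLinearMap.coe_coe, innerSL_apply_apply] at this
    exact inner_self_eq_zero.mp this
  rw [hx0] at hx1
  simp at hx1
end
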